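/- arXiv:2307.13075 — 3 statements merged into one kernel-verified Lean document; each statement's English description precedes it below -/
import Mathlib

section
/- If X ⊆ ℕ has the form X = A ∩ B, where A ⊆ ℕ is Σ¹₁ and B ⊆ ℕ is Π¹₁, then X ≤_m ATile. -/
/-- A Wang prototile: a 4-tuple `(l, u, r, b)` of natural-number edge colours. -/
abbrev WangTile : Type := ℕ × ℕ × ℕ × ℕ

def tileLeft (t : WangTile) : ℕ := t.1
def tileUp (t : WangTile) : ℕ := t.2.1
def tileRight (t : WangTile) : ℕ := t.2.2.1
def tileBottom (t : WangTile) : ℕ := t.2.2.2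

/-- `f` is an `S`-tiling of the region `R ⊆ ℤ × ℤ`: on `R` the tiles come from `S`,
and horizontally/vertically adjacent positions inside `R` have matching edge colours. -/
def IsTiling (S : Set WangTile) (R : Set (ℤ × ℤ)) (f : ℤ × ℤ → WangTile) : Prop :=
  (∀ p ∈ R, f p ∈ S) ∧
  (∀ x y : ℤ, ((x, y) : ℤ × ℤ) ∈ R → ((x + 1, y) : ℤ × ℤ) ∈ R →
    tileRight (f (x, y)) = tileLeft (f (x + 1, y))) ∧
  (∀ x y : ℤ, ((x, y) : ℤ × ℤ) ∈ R → ((x, y + 1) : ℤ × ℤ) ∈ R →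
    tileUp (f (x, y)) = tileBottom (f (x, y + 1)))

/-- The standard enumeration of partial computable functions `ℕ →. ℕ`. -/
def Phi (e : ℕ) : ℕ →. ℕ := (Denumerable.ofNat Nat.Partrec.Code e).eval

/-- `φ_e` is total. -/
def PhiTotal (e : ℕ) : Prop := ∀ m : ℕ, (Phi e m).Dom

/-- `φ_e` is total and `{0,1}`-valued. -/
def PhiTotalBool (e : ℕ) : Prop := ∀ m : ℕ, ∃ v : ℕ, v ∈ Phi e m ∧ (v = 0 ∨ v = 1)

/-- The set of Wang prototiles coded by `e`: tiles whose code is accepted by `φ_e`. -/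
def PhiTileSet (e : ℕ) : Set WangTile := {t : WangTile | 1 ∈ Phi e (Encodable.encode t)}

/-- The set of finite sequences coded by `e`: sequences whose code is accepted by `φ_e`. -/
def TSet (e : ℕ) : Set (List ℕ) := {σ : List ℕ | 1 ∈ Phi e (Encodable.encode σ)}

/-- A tree: a set of finite sequences closed under initial segments. -/
def IsTree (T : Set (List ℕ)) : Prop := ∀ σ ∈ T, ∀ τ : List ℕ, τ <+: σ → τ ∈ T

/-- A tree is ill-founded if it has an infinite path. -/
def IllFounded (T : Set (List ℕ)) : Prop :=
  ∃ p : ℕ → ℕ, ∀ n : ℕ, (List.range n).map p ∈ T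

/-- A total tiling is periodic if it is invariant under some nonzero translation. -/
def IsPeriodic (f : ℤ × ℤ → WangTile) : Prop :=
  ∃ v : ℤ × ℤ, v ≠ 0 ∧ ∀ p : ℤ × ℤ, f (p + v) = f p

/-- `X ⊆ ℕ` is `Σ¹₁`. -/
def Sigma11 (X : Set ℕ) : Prop :=
  ∃ R : ℕ × List ℕ → Bool, Computable R ∧
    ∀ n : ℕ, n ∈ X ↔ ∃ f : ℕ → ℕ, ∀ k : ℕ, R (n, (List.range k).map f) = true

/-- `X ⊆ ℕ` is `Π¹₁`. -/
def Pi11 (X : Set ℕ) : Prop :=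
  ∃ R : ℕ × List ℕ → Bool, Computable R ∧
    ∀ n : ℕ, n ∈ X ↔ ∀ f : ℕ → ℕ, ∃ k : ℕ, R (n, (List.range k).map f) = true

def ATile : Set ℕ :=
  {e | PhiTotalBool e ∧ (∃ f : ℤ × ℤ → WangTile, IsTiling (PhiTileSet e) Set.univ f) ∧
    ∀ f : ℤ × ℤ → WangTile, IsTiling (PhiTileSet e) Set.univ f → ¬ IsPeriodic f}

namespace ATileAux

open Encodable Denumerable

/-! ### Colours -/

def hC (tg : ℕ) (σ : List ℕ) : ℕ := Nat.pair tg (Encodable.encode σ)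
def vL : ℕ := Nat.pair 4 0
def vR : ℕ := Nat.pair 5 0
def vD (k : ℕ) : ℕ := Nat.pair 3 (Nat.pair 0 k)
def vU (k : ℕ) : ℕ := Nat.pair 3 (Nat.pair 1 k)

theorem hC_inj {t t' : ℕ} {σ σ' : List ℕ} : hC t σ = hC t' σ' ↔ t = t' ∧ σ = σ' := by
  simp [hC, Nat.pair_eq_pair]

@[simp] theorem encode_list_eq_zero {τ : List ℕ} : Encodable.encode τ = 0 ↔ τ = [] := by
  cases τ with
  | nil => simp
  | cons a l => simp [Encodable.encode_list_cons]

@[simp] theorem zero_eq_encode_list {τ : List ℕ} : 0 = Encodable.encode τ ↔ τ = [] := by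
  rw [eq_comm]; exact encode_list_eq_zero

/-! ### The tile set -/

inductive Mem (a b : List ℕ → Bool) : WangTile → Prop
  | rt (σ : List ℕ) (m : ℕ) (h : a (σ ++ [m]) = true) :
      Mem a b (hC 2 σ, vR, hC 2 (σ ++ [m]), vR)
  | lj (σ : List ℕ) (m : ℕ) : Mem a b (hC 0 (σ ++ [m]), vL, hC 0 σ, vL)
  | lw (σ : List ℕ) (m : ℕ) (h : b (σ ++ [m]) = false) :
      Mem a b (hC 1 (σ ++ [m]), vL, hC 1 σ, vL)
  | onD (k : ℕ) (h : a [] = true) : Mem a b (hC 0 [], vD k, hC 2 [], vD (k+1))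
  | onM (h : a [] = true) : Mem a b (hC 0 [], vU 0, hC 2 [], vD 0)
  | onU (k : ℕ) (h : a [] = true) : Mem a b (hC 0 [], vU (k+1), hC 2 [], vU k)
  | rs (w : ℕ) (h : a [] = true) (h' : b [] = false) :
      Mem a b (hC 1 [], vD 0, hC 2 [], Nat.pair 3 w)

def TS (a b : List ℕ → Bool) : Set WangTile := {t | Mem a b t}

def pref (f : ℕ → ℕ) (k : ℕ) : List ℕ := (List.range k).map f

theorem pref_zero (f : ℕ → ℕ) : pref f 0 = [] := rfl

theorem pref_succ (f : ℕ → ℕ) (k : ℕ) : pref f (k+1) = pref f k ++ [f k] := by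
  simp [pref, List.range_succ]

/-! ### Inversion lemmas -/

section Inv

variable {a b : List ℕ → Bool} {t : WangTile}

theorem invLeftForm (h : Mem a b t) :
    (∃ σ, tileLeft t = hC 0 σ) ∨ (∃ σ, tileLeft t = hC 1 σ) ∨ (∃ σ, tileLeft t = hC 2 σ) := by
  obtain ⟨l, u, r, bo⟩ := t
  cases h <;> simp [tileLeft]

/-- Tiles whose right colour is in the `R` family. -/
theorem invRightR {τ : List ℕ} (h : Mem a b t) (hr : tileRight t = hC 2 τ) :
    (∃ σ m, τ = σ ++ [m] ∧ tileLeft t = hC 2 σ) ∨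
      (τ = [] ∧ (tileLeft t = hC 0 [] ∨ tileLeft t = hC 1 [])) := by
  obtain ⟨l, u, r, bo⟩ := t
  cases h with
  | rt σ m h =>
      simp only [tileRight, hC_inj] at hr
      exact Or.inl ⟨σ, m, hr.2.symm, rfl⟩
  | lj σ m => simp [tileRight, hC_inj] at hr
  | lw σ m h => simp [tileRight, hC_inj] at hr
  | onD k h => simp_all [tileRight, tileLeft, hC_inj]
  | onM h => simp_all [tileRight, tileLeft, hC_inj]
  | onU k h => simp_all [tileRight, tileLeft, hC_inj]
  | rs w h h' => simp_all [tileRight, tileLeft, hC_inj]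

/-- Tiles whose left colour is in one of the `L` families. -/
theorem invLeftL {tg : ℕ} {σ : List ℕ} (htg : tg = 0 ∨ tg = 1) (h : Mem a b t)
    (hl : tileLeft t = hC tg σ) :
    (∃ σ' m, σ = σ' ++ [m] ∧ tileRight t = hC tg σ') ∨
      (σ = [] ∧ (tileLeft t = hC 0 [] ∨ tileLeft t = hC 1 [])) := by
  obtain ⟨l, u, r, bo⟩ := t
  cases h with
  | rt σ' m h =>
      rcases htg with rfl | rfl <;> simp [tileLeft, hC_inj] at hl
  | lj σ' m =>
      simp only [tileLeft, hC_inj] at hl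
      rcases htg with rfl | rfl
      · exact Or.inl ⟨σ', m, hl.2.symm, rfl⟩
      · exact absurd hl.1 (by norm_num)
  | lw σ' m h =>
      simp only [tileLeft, hC_inj] at hl
      rcases htg with rfl | rfl
      · exact absurd hl.1 (by norm_num)
      · exact Or.inl ⟨σ', m, hl.2.symm, rfl⟩
  | onD k h => simp_all [tileLeft, hC_inj]
  | onM h => simp_all [tileLeft, hC_inj]
  | onU k h => simp_all [tileLeft, hC_inj]
  | rs w h h' => simp_all [tileLeft, hC_inj]

/-- Any tile whose left colour is an origin marker is a full origin tile. -/
theorem invOrigin (h : Mem a b t)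
    (hl : tileLeft t = hC 0 [] ∨ tileLeft t = hC 1 []) :
    tileRight t = hC 2 [] ∧ (∃ w, tileUp t = Nat.pair 3 w) ∧
      (∃ w, tileBottom t = Nat.pair 3 w) ∧ a [] = true := by
  obtain ⟨l, u, r, bo⟩ := t
  cases h <;>
    simp_all [tileRight, tileLeft, tileUp, tileBottom, hC_inj, vL, vR, vD, vU,
      Nat.pair_eq_pair, hC]

end Inv

end ATileAux
namespace ATileAux

section Inv2

variable {a b : List ℕ → Bool} {t : WangTile}

def rank (w : ℕ) : ℤ := if w.unpair.1 = 0 then -(w.unpair.2 : ℤ) else (w.unpair.2 : ℤ) + 1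

theorem invUp3 {w : ℕ} (h : Mem a b t) (hu : tileUp t = Nat.pair 3 w) :
    tileLeft t = hC 0 [] ∨ tileLeft t = hC 1 [] := by
  obtain ⟨l, u, r, bo⟩ := t
  cases h <;> simp_all [tileUp, tileLeft, vL, vR, vD, vU, Nat.pair_eq_pair]

theorem invBottom3 {w : ℕ} (h : Mem a b t) (hb : tileBottom t = Nat.pair 3 w) :
    tileLeft t = hC 0 [] ∨ tileLeft t = hC 1 [] := by
  obtain ⟨l, u, r, bo⟩ := t
  cases h <;> simp_all [tileBottom, tileLeft, vL, vR, vD, vU, Nat.pair_eq_pair]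

/-- A tile whose left colour is in the `R` family is an `rt` tile. -/
theorem invLeftR {σ : List ℕ} (h : Mem a b t) (hl : tileLeft t = hC 2 σ) :
    ∃ m, tileRight t = hC 2 (σ ++ [m]) ∧ a (σ ++ [m]) = true := by
  obtain ⟨l, u, r, bo⟩ := t
  cases h with
  | rt σ' m h =>
      simp only [tileLeft, hC_inj] at hl
      obtain ⟨-, rfl⟩ := hl
      exact ⟨m, rfl, h⟩
  | lj σ' m => simp [tileLeft, hC_inj] at hl
  | lw σ' m h => simp [tileLeft, hC_inj] at hl
  | onD k h => simp [tileLeft, hC_inj] at hl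
  | onM h => simp [tileLeft, hC_inj] at hl
  | onU k h => simp [tileLeft, hC_inj] at hl
  | rs w h h' => simp [tileLeft, hC_inj] at hl

/-- A tile whose right colour is in an `L` family is an `lj`/`lw` tile. -/
theorem invRightL {tg : ℕ} {τ : List ℕ} (htg : tg = 0 ∨ tg = 1) (h : Mem a b t)
    (hr : tileRight t = hC tg τ) :
    ∃ m, tileLeft t = hC tg (τ ++ [m]) ∧ (tg = 1 → b (τ ++ [m]) = false) := by
  obtain ⟨l, u, r, bo⟩ := t
  cases h with
  | rt σ' m h => rcases htg with rfl | rfl <;> simp [tileRight, hC_inj] at hr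
  | lj σ' m =>
      rcases htg with rfl | rfl
      · simp only [tileRight, hC_inj] at hr
        obtain ⟨-, rfl⟩ := hr
        exact ⟨m, rfl, by norm_num⟩
      · simp [tileRight, hC_inj] at hr
  | lw σ' m h =>
      rcases htg with rfl | rfl
      · simp [tileRight, hC_inj] at hr
      · simp only [tileRight, hC_inj] at hr
        obtain ⟨-, rfl⟩ := hr
        exact ⟨m, rfl, fun _ => h⟩
  | onD k h => rcases htg with rfl | rfl <;> simp [tileRight, hC_inj] at hr
  | onM h => rcases htg with rfl | rfl <;> simp [tileRight, hC_inj] at hr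
  | onU k h => rcases htg with rfl | rfl <;> simp [tileRight, hC_inj] at hr
  | rs w h h' => rcases htg with rfl | rfl <;> simp [tileRight, hC_inj] at hr

/-- A tile whose left colour is `hC 1 []` is a reset tile. -/
theorem invRS (h : Mem a b t) (hl : tileLeft t = hC 1 []) : b [] = false := by
  obtain ⟨l, u, r, bo⟩ := t
  cases h <;> simp_all [tileLeft, hC_inj]

/-- A tile whose left colour is `hC 0 []` is a normal origin: its counter increases. -/
theorem invNorm (h : Mem a b t) (hl : tileLeft t = hC 0 []) :
    ∃ wb wu, tileBottom t = Nat.pair 3 wb ∧ tileUp t = Nat.pair 3 wu ∧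
      rank wu = rank wb + 1 := by
  obtain ⟨l, u, r, bo⟩ := t
  cases h with
  | rt σ' m h => simp [tileLeft, hC_inj] at hl
  | lj σ' m => simp [tileLeft, hC_inj] at hl
  | lw σ' m h => simp [tileLeft, hC_inj] at hl
  | onD k h =>
      refine ⟨Nat.pair 0 (k+1), Nat.pair 0 k, rfl, rfl, ?_⟩
      simp [rank, Nat.unpair_pair]
  | onM h =>
      refine ⟨Nat.pair 0 0, Nat.pair 1 0, rfl, rfl, ?_⟩
      simp [rank, Nat.unpair_pair]
  | onU k h =>
      refine ⟨Nat.pair 1 k, Nat.pair 1 (k+1), rfl, rfl, ?_⟩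
      simp [rank, Nat.unpair_pair]
  | rs w h h' => simp [tileLeft, hC_inj] at hl

end Inv2

end ATileAux
namespace ATileAux

def OriginAt (f : ℤ × ℤ → WangTile) (x y : ℤ) : Prop :=
  tileLeft (f (x, y)) = hC 0 [] ∨ tileLeft (f (x, y)) = hC 1 []

def extEl (c : ℕ) : ℕ := (Denumerable.ofNat (List ℕ) c.unpair.2).reverse.headI

theorem extEl_hC (tg : ℕ) (σ : List ℕ) (m : ℕ) : extEl (hC tg (σ ++ [m])) = m := by
  simp [extEl, hC, Nat.unpair_pair, Denumerable.ofNat_encode]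

section Walk

variable {a b : List ℕ → Bool} {f : ℤ × ℤ → WangTile}
variable (hm : ∀ p : ℤ × ℤ, Mem a b (f p))
variable (hor : ∀ x y : ℤ, tileRight (f (x, y)) = tileLeft (f (x + 1, y)))
variable (hver : ∀ x y : ℤ, tileUp (f (x, y)) = tileBottom (f (x, y + 1)))

include hm hor in
theorem findOriginR (k : ℕ) : ∀ σ : List ℕ, σ.length = k → ∀ x y : ℤ,
    tileLeft (f (x, y)) = hC 2 σ → ∃ x₀, OriginAt f x₀ y := by
  induction k with
  | zero =>
      intro σ hσ x y hx
      obtain rfl := List.length_eq_zero_iff.mp hσ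
      have h2 := hor (x - 1) y
      have e : (x - 1 + 1 : ℤ) = x := by ring
      rw [e, hx] at h2
      rcases invRightR (hm (x - 1, y)) h2 with ⟨σ', m, habs, -⟩ | ⟨-, horig⟩
      · simp at habs
      · exact ⟨x - 1, horig⟩
  | succ n ih =>
      intro σ hσ x y hx
      have h2 := hor (x - 1) y
      have e : (x - 1 + 1 : ℤ) = x := by ring
      rw [e, hx] at h2
      rcases invRightR (hm (x - 1, y)) h2 with ⟨σ', m, rfl, hleft⟩ | ⟨rfl, -⟩
      · exact ih σ' (by simpa using hσ) (x - 1) y hleft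
      · simp at hσ

include hm hor in
theorem findOriginL (k : ℕ) : ∀ tg : ℕ, (tg = 0 ∨ tg = 1) → ∀ σ : List ℕ, σ.length = k →
    ∀ x y : ℤ, tileLeft (f (x, y)) = hC tg σ → ∃ x₀, OriginAt f x₀ y := by
  induction k with
  | zero =>
      intro tg htg σ hσ x y hx
      obtain rfl := List.length_eq_zero_iff.mp hσ
      rcases htg with rfl | rfl
      · exact ⟨x, Or.inl hx⟩
      · exact ⟨x, Or.inr hx⟩
  | succ n ih =>
      intro tg htg σ hσ x y hx
      rcases invLeftL htg (hm (x, y)) hx with ⟨σ', m, rfl, hright⟩ | ⟨-, horig⟩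
      · exact ih tg htg σ' (by simpa using hσ) (x + 1) y (by rw [← hor x y, hright])
      · exact ⟨x, horig⟩

include hm hor in
theorem exists_origin (y : ℤ) : ∃ x₀, OriginAt f x₀ y := by
  rcases invLeftForm (hm (0, y)) with ⟨σ, hσ⟩ | ⟨σ, hσ⟩ | ⟨σ, hσ⟩
  · exact findOriginL hm hor σ.length 0 (Or.inl rfl) σ rfl 0 y hσ
  · exact findOriginL hm hor σ.length 1 (Or.inr rfl) σ rfl 0 y hσ
  · exact findOriginR hm hor σ.length σ rfl 0 y hσ

include hm hver in
theorem origin_up {x y : ℤ} (h : OriginAt f x y) : OriginAt f x (y + 1) := by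
  obtain ⟨-, ⟨w, hw⟩, -, -⟩ := invOrigin (hm (x, y)) h
  have h2 := hver x y
  rw [hw] at h2
  exact invBottom3 (hm (x, y + 1)) h2.symm

include hm hver in
theorem origin_down {x y : ℤ} (h : OriginAt f x y) : OriginAt f x (y - 1) := by
  obtain ⟨-, -, ⟨w, hw⟩, -⟩ := invOrigin (hm (x, y)) h
  have h2 := hver x (y - 1)
  have e : (y - 1 + 1 : ℤ) = y := by ring
  rw [e, hw] at h2
  exact invUp3 (hm (x, y - 1)) h2

include hm hver in
theorem origin_col {x y₀ : ℤ} (h : OriginAt f x y₀) : ∀ y, OriginAt f x y := by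
  have key : ∀ z : ℤ, OriginAt f x (y₀ + z) := by
    intro z
    induction z using Int.induction_on with
    | zero => simpa using h
    | succ i ih =>
        have h2 := origin_up hm hver ih
        have e : (y₀ + ((i : ℤ) + 1)) = (y₀ + i) + 1 := by ring
        rw [e]; exact h2
    | pred i ih =>
        have h2 := origin_down hm hver ih
        have e : (y₀ + (-(i : ℤ) - 1)) = (y₀ + -(i : ℤ)) - 1 := by ring
        rw [e]; exact h2
  intro y
  have h2 := key (y - y₀)
  have e : (y₀ + (y - y₀) : ℤ) = y := by ring
  rwa [e] at h2

include hm hor in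
theorem origin_unique_aux {x₀ x₁ y : ℤ} (h₀ : OriginAt f x₀ y) (h₁ : OriginAt f x₁ y)
    (hlt : x₀ < x₁) : False := by
  have chain : ∀ d : ℕ, ∃ tg σ, (tg = 0 ∨ tg = 1) ∧ σ.length = d + 1 ∧
      tileLeft (f (x₁ - 1 - (d : ℤ), y)) = hC tg σ := by
    intro d
    induction d with
    | zero =>
        have h2 := hor (x₁ - 1) y
        have e : (x₁ - 1 + 1 : ℤ) = x₁ := by ring
        rw [e] at h2
        have e0 : (x₁ - 1 - ((0 : ℕ) : ℤ)) = x₁ - 1 := by push_cast; ring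
        rcases h₁ with hl | hl
        · obtain ⟨m, hm', -⟩ := invRightL (Or.inl rfl) (hm (x₁ - 1, y)) (by rw [h2, hl])
          exact ⟨0, [m], Or.inl rfl, by simp, by rw [e0]; simpa using hm'⟩
        · obtain ⟨m, hm', -⟩ := invRightL (Or.inr rfl) (hm (x₁ - 1, y)) (by rw [h2, hl])
          exact ⟨1, [m], Or.inr rfl, by simp, by rw [e0]; simpa using hm'⟩
    | succ n ih =>
        obtain ⟨tg, σ, htg, hlen, hl⟩ := ih
        have h2 := hor (x₁ - 1 - ((n : ℤ) + 1)) y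
        have e : (x₁ - 1 - ((n : ℤ) + 1) + 1 : ℤ) = x₁ - 1 - (n : ℤ) := by ring
        rw [e] at h2
        obtain ⟨m, hm', -⟩ := invRightL htg (hm (x₁ - 1 - ((n : ℤ) + 1), y)) (by rw [h2, hl])
        refine ⟨tg, σ ++ [m], htg, by simp [hlen], ?_⟩
        have e2 : (x₁ - 1 - ((n + 1 : ℕ) : ℤ)) = x₁ - 1 - ((n : ℤ) + 1) := by push_cast; ring
        rw [e2]; exact hm'
  obtain ⟨d, hd⟩ : ∃ d : ℕ, x₁ - 1 - (d : ℤ) = x₀ := ⟨(x₁ - 1 - x₀).toNat, by omega⟩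
  obtain ⟨tg, σ, htg, hlen, hl⟩ := chain d
  rw [hd] at hl
  rcases h₀ with hl0 | hl0 <;>
  · obtain ⟨-, rfl⟩ := hC_inj.mp (hl0.symm.trans hl)
    simp at hlen

include hm hor in
theorem origin_unique {x₀ x₁ y : ℤ} (h₀ : OriginAt f x₀ y) (h₁ : OriginAt f x₁ y) :
    x₀ = x₁ := by
  rcases lt_trichotomy x₀ x₁ with h | h | h
  · exact absurd (origin_unique_aux hm hor h₀ h₁ h) id
  · exact h
  · exact absurd (origin_unique_aux hm hor h₁ h₀ h) id

include hm hor in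
theorem extract_right {x₀ y₀ : ℤ} (h : OriginAt f x₀ y₀) :
    ∃ f0 : ℕ → ℕ, ∀ k, a (pref f0 k) = true := by
  obtain ⟨hr0, -, -, ha0⟩ := invOrigin (hm (x₀, y₀)) h
  set f0 : ℕ → ℕ := fun k => extEl (tileRight (f (x₀ + 1 + (k : ℤ), y₀))) with hf0
  have claim : ∀ k : ℕ, tileLeft (f (x₀ + 1 + (k : ℤ), y₀)) = hC 2 (pref f0 k) ∧
      a (pref f0 k) = true := by
    intro k
    induction k with
    | zero =>
        refine ⟨?_, ha0⟩
        have h2 := hor x₀ y₀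
        have e : (x₀ + 1 + ((0 : ℕ) : ℤ)) = x₀ + 1 := by push_cast; ring
        rw [e, ← h2, hr0, pref_zero]
    | succ n ih =>
        obtain ⟨hl, -⟩ := ih
        obtain ⟨m, hrm, ham⟩ := invLeftR (hm _) hl
        have hm0 : f0 n = m := by rw [hf0]; simp only; rw [hrm, extEl_hC]
        constructor
        · have h2 := hor (x₀ + 1 + (n : ℤ)) y₀
          have e : (x₀ + 1 + ((n + 1 : ℕ) : ℤ)) = x₀ + 1 + (n : ℤ) + 1 := by push_cast; ring
          rw [e, ← h2, hrm, pref_succ, hm0]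
        · rw [pref_succ, hm0]; exact ham
  exact ⟨f0, fun k => (claim k).2⟩

include hm hor in
theorem extract_left {x₀ y₀ : ℤ} (h : tileLeft (f (x₀, y₀)) = hC 1 []) :
    ∃ g : ℕ → ℕ, ∀ k, b (pref g k) = false := by
  have hb0 := invRS (hm (x₀, y₀)) h
  set g : ℕ → ℕ := fun k => extEl (tileLeft (f (x₀ - 1 - (k : ℤ), y₀))) with hg
  have claim : ∀ k : ℕ, tileRight (f (x₀ - 1 - (k : ℤ), y₀)) = hC 1 (pref g k) ∧
      b (pref g k) = false := by
    intro k
    induction k with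
    | zero =>
        refine ⟨?_, hb0⟩
        have h2 := hor (x₀ - 1) y₀
        have e : (x₀ - 1 + 1 : ℤ) = x₀ := by ring
        rw [e] at h2
        have e0 : (x₀ - 1 - ((0 : ℕ) : ℤ)) = x₀ - 1 := by push_cast; ring
        rw [e0, h2, h, pref_zero]
    | succ n ih =>
        obtain ⟨hr, -⟩ := ih
        obtain ⟨m, hlm, hbm⟩ := invRightL (Or.inr rfl) (hm _) hr
        have hm0 : g n = m := by rw [hg]; simp only; rw [hlm, extEl_hC]
        constructor
        · have h2 := hor (x₀ - 1 - ((n + 1 : ℕ) : ℤ)) y₀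
          have e : (x₀ - 1 - ((n + 1 : ℕ) : ℤ) + 1) = x₀ - 1 - (n : ℤ) := by push_cast; ring
          rw [e] at h2
          rw [h2, hlm, pref_succ, hm0]
        · rw [pref_succ, hm0]; exact hbm rfl
  exact ⟨g, fun k => (claim k).2⟩

include hm hver in
theorem periodic_reset {x₀ : ℤ} (hcol : ∀ y, OriginAt f x₀ y) {b' : ℕ} (hb' : 0 < b')
    (hper : ∀ p : ℤ × ℤ, f (p.1, p.2 + (b' : ℤ)) = f p) :
    ∃ y, tileLeft (f (x₀, y)) = hC 1 [] := by
  by_contra hno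
  push_neg at hno
  have hall : ∀ y, tileLeft (f (x₀, y)) = hC 0 [] := fun y => (hcol y).resolve_right (hno y)
  set rk : ℤ → ℤ := fun y => rank ((tileBottom (f (x₀, y))).unpair.2) with hrk
  have step : ∀ y : ℤ, rk (y + 1) = rk y + 1 := by
    intro y
    obtain ⟨wb, wu, hwb, hwu, hrank⟩ := invNorm (hm (x₀, y)) (hall y)
    have h2 := hver x₀ y
    rw [hwu] at h2
    rw [hrk]
    simp only
    rw [← h2, hwb, Nat.unpair_pair, Nat.unpair_pair]
    exact hrank
  have up : ∀ d : ℕ, rk (d : ℤ) = rk 0 + d := by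
    intro d
    induction d with
    | zero => simp
    | succ n ih =>
        have h2 := step (n : ℤ)
        have e : (((n + 1 : ℕ)) : ℤ) = (n : ℤ) + 1 := by omega
        rw [e, h2, ih]; ring
  have hp := hper (x₀, 0)
  simp only [zero_add] at hp
  have hrb : rk (b' : ℤ) = rk 0 := by rw [hrk]; simp only; rw [hp]
  have := up b'
  rw [hrb] at this
  omega

include hm hor hver in
theorem periodic_witness (hp : IsPeriodic f) :
    ∃ g : ℕ → ℕ, ∀ k, b (pref g k) = false := by
  obtain ⟨⟨v1, v2⟩, hv, hper⟩ := hp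
  obtain ⟨x₀, h0⟩ := exists_origin hm hor (0 : ℤ)
  have hcol := origin_col hm hver h0
  have hO : OriginAt f (x₀ + v1) v2 := by
    have h2 := hper (x₀, 0)
    have e : ((x₀, 0) + (v1, v2) : ℤ × ℤ) = (x₀ + v1, v2) := by
      simp [Prod.ext_iff]
    rw [e] at h2
    unfold OriginAt
    rw [h2]
    exact h0
  have hv1 : x₀ + v1 = x₀ := origin_unique hm hor hO (hcol v2)
  have hv2 : v2 ≠ 0 := by
    rintro rfl
    apply hv
    have : v1 = 0 := by omega
    subst this
    rfl
  set b' := v2.natAbs with hb'def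
  have hb' : 0 < b' := Int.natAbs_pos.mpr hv2
  have hv1' : v1 = 0 := by omega
  subst hv1'
  have hper' : ∀ p : ℤ × ℤ, f (p.1, p.2 + (b' : ℤ)) = f p := by
    intro p
    rcases Int.natAbs_eq v2 with he | he
    · have h2 := hper p
      have e : (p + (0, v2) : ℤ × ℤ) = (p.1, p.2 + (b' : ℤ)) := by
        rw [← he]; simp [Prod.ext_iff]
      rw [e] at h2
      exact h2
    · have h2 := hper (p.1, p.2 + (b' : ℤ))
      have e : (((p.1, p.2 + (b' : ℤ)) : ℤ × ℤ) + (0, v2)) = p := by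
        simp [Prod.ext_iff]
        omega
      rw [e] at h2
      exact h2.symm
  obtain ⟨ys, hy⟩ := periodic_reset hm hver hcol hb' hper'
  exact extract_left hm hor hy

end Walk

end ATileAux
namespace ATileAux

/-! ### Constructions of tilings -/

def ζ (y : ℤ) : ℕ := if y ≤ 0 then vD (-y).toNat else vU (y - 1).toNat

/-- An (aperiodic) tiling built from a witness `f0` for the `Σ¹₁` side. -/
def F1 (f0 : ℕ → ℕ) (p : ℤ × ℤ) : WangTile :=
  if p.1 < 0 then
    (hC 0 (List.replicate ((-p.1).toNat - 1) 0 ++ [0]), vL,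
      hC 0 (List.replicate ((-p.1).toNat - 1) 0), vL)
  else if p.1 = 0 then (hC 0 [], ζ (p.2 + 1), hC 2 [], ζ p.2)
  else (hC 2 (pref f0 (p.1.toNat - 1)), vR,
    hC 2 (pref f0 (p.1.toNat - 1) ++ [f0 (p.1.toNat - 1)]), vR)

/-- A periodic tiling built from witnesses `f0` and `g0`. -/
def F4 (f0 g0 : ℕ → ℕ) (x : ℤ) : WangTile :=
  if x < 0 then
    (hC 1 (pref g0 ((-x).toNat - 1) ++ [g0 ((-x).toNat - 1)]), vL,
      hC 1 (pref g0 ((-x).toNat - 1)), vL)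
  else if x = 0 then (hC 1 [], vD 0, hC 2 [], vD 0)
  else (hC 2 (pref f0 (x.toNat - 1)), vR,
    hC 2 (pref f0 (x.toNat - 1) ++ [f0 (x.toNat - 1)]), vR)

section Constr

variable {a b : List ℕ → Bool} {f0 g0 : ℕ → ℕ}

theorem F1_tiling (hf : ∀ k, a (pref f0 k) = true) :
    IsTiling (TS a b) Set.univ (F1 f0) := by
  refine ⟨?_, ?_, ?_⟩
  · rintro ⟨x, y⟩ -
    show Mem a b (F1 f0 (x, y))
    by_cases h1 : x < 0
    · simp only [F1, if_pos h1]
      exact Mem.lj _ _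
    by_cases h2 : x = 0
    · simp only [F1, if_neg h1, if_pos h2]
      rcases lt_trichotomy y 0 with hy | rfl | hy
      · have e1 : ζ y = vD (((-y).toNat - 1) + 1) := by
          simp only [ζ, if_pos hy.le]
          congr 1
          omega
        have e2 : ζ (y + 1) = vD ((-y).toNat - 1) := by
          simp only [ζ, if_pos (by omega : y + 1 ≤ 0)]
          congr 1
          omega
        rw [e1, e2]
        exact Mem.onD _ (hf 0)
      · have e1 : ζ (0 : ℤ) = vD 0 := by simp [ζ]
        have e2 : ζ (0 + 1 : ℤ) = vU 0 := by norm_num [ζ]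
        rw [e1, e2]
        exact Mem.onM (hf 0)
      · have e1 : ζ y = vU (y - 1).toNat := by simp [ζ, not_le.mpr hy]
        have e2 : ζ (y + 1) = vU ((y - 1).toNat + 1) := by
          simp only [ζ, if_neg (by omega : ¬ y + 1 ≤ 0)]
          congr 1
          omega
        rw [e1, e2]
        exact Mem.onU _ (hf 0)
    · simp only [F1, if_neg h1, if_neg h2]
      exact Mem.rt _ _ (by rw [← pref_succ]; exact hf _)
  · intro x y _ _
    show tileRight (F1 f0 (x, y)) = tileLeft (F1 f0 (x + 1, y))
    rcases lt_trichotomy x (-1) with hx | rfl | hx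
    · simp only [F1, if_pos (by omega : x < 0), if_pos (by omega : x + 1 < 0),
        tileRight, tileLeft]
      have e : ((-x).toNat - 1) = ((-(x+1)).toNat - 1) + 1 := by omega
      rw [e, List.replicate_succ']
    · norm_num [F1, tileRight, tileLeft]
    by_cases h2 : x = 0
    · subst h2
      simp only [F1]
      norm_num [tileRight, tileLeft, pref_zero]
    · have hx1 : ¬ x < 0 := by omega
      have hx2 : ¬ x + 1 < 0 := by omega
      have hx3 : ¬ x + 1 = 0 := by omega
      simp only [F1, if_neg hx1, if_neg h2, if_neg hx2, if_neg hx3, tileRight, tileLeft]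
      have e : (x + 1).toNat - 1 = (x.toNat - 1) + 1 := by omega
      rw [e, pref_succ]
  · intro x y _ _
    show tileUp (F1 f0 (x, y)) = tileBottom (F1 f0 (x, y + 1))
    by_cases h1 : x < 0
    · simp [F1, if_pos h1, tileUp, tileBottom]
    by_cases h2 : x = 0
    · simp [F1, if_neg h1, if_pos h2, tileUp, tileBottom]
    · simp [F1, if_neg h1, if_neg h2, tileUp, tileBottom]

theorem F4_tiling (hf : ∀ k, a (pref f0 k) = true) (hg : ∀ k, b (pref g0 k) = false) :
    IsTiling (TS a b) Set.univ (fun p => F4 f0 g0 p.1) := by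
  refine ⟨?_, ?_, ?_⟩
  · rintro ⟨x, y⟩ -
    show Mem a b (F4 f0 g0 x)
    by_cases h1 : x < 0
    · simp only [F4, if_pos h1]
      exact Mem.lw _ _ (by rw [← pref_succ]; exact hg _)
    by_cases h2 : x = 0
    · simp only [F4, if_neg h1, if_pos h2]
      exact Mem.rs (Nat.pair 0 0) (hf 0) (hg 0)
    · simp only [F4, if_neg h1, if_neg h2]
      exact Mem.rt _ _ (by rw [← pref_succ]; exact hf _)
  · intro x y _ _
    show tileRight (F4 f0 g0 x) = tileLeft (F4 f0 g0 (x + 1))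
    rcases lt_trichotomy x (-1) with hx | rfl | hx
    · simp only [F4, if_pos (by omega : x < 0), if_pos (by omega : x + 1 < 0),
        tileRight, tileLeft]
      have e : ((-x).toNat - 1) = (((-(x+1)).toNat - 1) + 1) := by omega
      rw [e, pref_succ]
    · norm_num [F4, tileRight, tileLeft, pref_zero]
    by_cases h2 : x = 0
    · subst h2
      simp only [F4]
      norm_num [tileRight, tileLeft, pref_zero]
    · have hx1 : ¬ x < 0 := by omega
      have hx2 : ¬ x + 1 < 0 := by omega
      have hx3 : ¬ x + 1 = 0 := by omega
      simp only [F4, if_neg hx1, if_neg h2, if_neg hx2, if_neg hx3, tileRight, tileLeft]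
      have e : (x + 1).toNat - 1 = (x.toNat - 1) + 1 := by omega
      rw [e, pref_succ]
  · intro x y _ _
    show tileUp (F4 f0 g0 x) = tileBottom (F4 f0 g0 x)
    by_cases h1 : x < 0
    · simp [F4, if_pos h1, tileUp, tileBottom]
    by_cases h2 : x = 0
    · simp [F4, if_neg h1, if_pos h2, tileUp, tileBottom]
    · simp [F4, if_neg h1, if_neg h2, tileUp, tileBottom]

theorem F4_periodic : IsPeriodic (fun p : ℤ × ℤ => F4 f0 g0 p.1) := by
  refine ⟨(0, 1), ?_, ?_⟩
  · simp [Prod.ext_iff]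
  · intro p
    show F4 f0 g0 (p + (0, 1)).1 = F4 f0 g0 p.1
    simp

end Constr

/-! ### The main combinatorial equivalence -/

theorem main_iff (a b : List ℕ → Bool) :
    ((∃ f0 : ℕ → ℕ, ∀ k, a (pref f0 k) = true) ∧
      (∀ g : ℕ → ℕ, ∃ k, b (pref g k) = true)) ↔
    ((∃ f, IsTiling (TS a b) Set.univ f) ∧
      ∀ f, IsTiling (TS a b) Set.univ f → ¬ IsPeriodic f) := by
  constructor
  · rintro ⟨⟨f0, hf0⟩, hB⟩
    refine ⟨⟨F1 f0, F1_tiling hf0⟩, ?_⟩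
    intro f ht hp
    have hm : ∀ p : ℤ × ℤ, Mem a b (f p) := fun p => ht.1 p (Set.mem_univ _)
    have hor : ∀ x y : ℤ, tileRight (f (x, y)) = tileLeft (f (x + 1, y)) :=
      fun x y => ht.2.1 x y (Set.mem_univ _) (Set.mem_univ _)
    have hver : ∀ x y : ℤ, tileUp (f (x, y)) = tileBottom (f (x, y + 1)) :=
      fun x y => ht.2.2 x y (Set.mem_univ _) (Set.mem_univ _)
    obtain ⟨g, hg⟩ := periodic_witness hm hor hver hp
    obtain ⟨k, hk⟩ := hB g
    rw [hg k] at hk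
    exact Bool.false_ne_true hk
  · rintro ⟨⟨f, ht⟩, haper⟩
    have hm : ∀ p : ℤ × ℤ, Mem a b (f p) := fun p => ht.1 p (Set.mem_univ _)
    have hor : ∀ x y : ℤ, tileRight (f (x, y)) = tileLeft (f (x + 1, y)) :=
      fun x y => ht.2.1 x y (Set.mem_univ _) (Set.mem_univ _)
    have hA : ∃ f0 : ℕ → ℕ, ∀ k, a (pref f0 k) = true := by
      obtain ⟨x₀, h0⟩ := exists_origin hm hor 0
      exact extract_right hm hor h0
    refine ⟨hA, ?_⟩
    intro g
    by_contra hng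
    push_neg at hng
    have hg : ∀ k, b (pref g k) = false := fun k => by
      have h2 := hng k
      exact Bool.eq_false_iff.mpr h2
    obtain ⟨f0, hf0⟩ := hA
    exact haper _ (F4_tiling hf0 hg) F4_periodic

end ATileAux
namespace ATileAux

/-! ### A computable membership test for the tile set -/

def decLs (c : ℕ) : List ℕ := Denumerable.ofNat (List ℕ) c.unpair.2
def d2 (c : ℕ) : ℕ := c.unpair.2.unpair.2

theorem decLs_hC (tg : ℕ) (σ : List ℕ) : decLs (hC tg σ) = σ := by
  simp [decLs, hC, Nat.unpair_pair, Denumerable.ofNat_encode]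

theorem d2_vD (k : ℕ) : d2 (vD k) = k := by simp [d2, vD, Nat.unpair_pair]
theorem d2_vU (k : ℕ) : d2 (vU k) = k := by simp [d2, vU, Nat.unpair_pair]

theorem extEl_eq (c : ℕ) : extEl c = (decLs c).reverse.headI := rfl

def Qp (t : WangTile) (pA pB : Bool) : Prop :=
  (tileUp t = vR ∧ tileBottom t = vR ∧ tileLeft t = hC 2 (decLs (tileLeft t)) ∧
    tileRight t = hC 2 (decLs (tileLeft t) ++ [extEl (tileRight t)]) ∧ pA = true) ∨
  (tileUp t = vL ∧ tileBottom t = vL ∧ tileRight t = hC 0 (decLs (tileRight t)) ∧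
    tileLeft t = hC 0 (decLs (tileRight t) ++ [extEl (tileLeft t)])) ∨
  (tileUp t = vL ∧ tileBottom t = vL ∧ tileRight t = hC 1 (decLs (tileRight t)) ∧
    tileLeft t = hC 1 (decLs (tileRight t) ++ [extEl (tileLeft t)]) ∧ pB = false) ∨
  (tileLeft t = hC 0 [] ∧ tileRight t = hC 2 [] ∧ tileUp t = vD (d2 (tileUp t)) ∧
    tileBottom t = vD (d2 (tileUp t) + 1) ∧ pA = true) ∨
  (tileLeft t = hC 0 [] ∧ tileRight t = hC 2 [] ∧ tileUp t = vU 0 ∧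
    tileBottom t = vD 0 ∧ pA = true) ∨
  (tileLeft t = hC 0 [] ∧ tileRight t = hC 2 [] ∧ tileUp t = vU (d2 (tileBottom t) + 1) ∧
    tileBottom t = vU (d2 (tileBottom t)) ∧ pA = true) ∨
  (tileLeft t = hC 1 [] ∧ tileRight t = hC 2 [] ∧ tileUp t = vD 0 ∧
    tileBottom t = Nat.pair 3 (tileBottom t).unpair.2 ∧ pA = true ∧ pB = false)

theorem Qp_iff_mem {a b : List ℕ → Bool} (t : WangTile) :
    Qp t (a (decLs (tileRight t))) (b (decLs (tileLeft t))) ↔ Mem a b t := by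
  constructor
  · obtain ⟨l, u, r, bo⟩ := t
    simp only [Qp, tileLeft, tileUp, tileRight, tileBottom]
    rintro (⟨hu, hb, hl, hr, hA⟩ | ⟨hu, hb, hr, hl⟩ | ⟨hu, hb, hr, hl, hB⟩ |
      ⟨hl, hr, hu, hb, hA⟩ | ⟨hl, hr, hu, hb, hA⟩ | ⟨hl, hr, hu, hb, hA⟩ |
      ⟨hl, hr, hu, hb, hA, hB⟩)
    · subst hu; subst hb
      generalize hm' : extEl r = m at hr
      generalize hσ : decLs l = σ at hl hr
      subst hl; subst hr
      rw [decLs_hC] at hA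
      exact Mem.rt σ m hA
    · subst hu; subst hb
      generalize hm' : extEl l = m at hl
      generalize hσ : decLs r = σ at hr hl
      subst hr; subst hl
      exact Mem.lj σ m
    · subst hu; subst hb
      generalize hm' : extEl l = m at hl
      generalize hσ : decLs r = σ at hr hl
      subst hr; subst hl
      rw [decLs_hC] at hB
      exact Mem.lw σ m hB
    · subst hl; subst hr
      generalize hk : d2 u = k at hu hb
      subst hu; subst hb
      rw [decLs_hC] at hA
      exact Mem.onD k hA
    · subst hl; subst hr; subst hu; subst hb
      rw [decLs_hC] at hA
      exact Mem.onM hA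
    · subst hl; subst hr
      generalize hk : d2 bo = k at hu hb
      subst hu; subst hb
      rw [decLs_hC] at hA
      exact Mem.onU k hA
    · subst hl; subst hr; subst hu
      generalize hw : bo.unpair.2 = w at hb
      subst hb
      rw [decLs_hC] at hA hB
      exact Mem.rs w hA hB
  · intro h
    cases h with
    | rt σ m h =>
        exact Or.inl ⟨rfl, rfl, by rw [tileLeft, decLs_hC], by
          simp only [tileLeft, tileRight, decLs_hC, extEl_hC], by
          simp only [tileRight, decLs_hC]; exact h⟩
    | lj σ m =>
        exact Or.inr (Or.inl ⟨rfl, rfl, by rw [tileRight, decLs_hC], by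
          simp only [tileLeft, tileRight, decLs_hC, extEl_hC]⟩)
    | lw σ m h =>
        refine Or.inr (Or.inr (Or.inl ⟨rfl, rfl, by rw [tileRight, decLs_hC], by
          simp only [tileLeft, tileRight, decLs_hC, extEl_hC], ?_⟩))
        simp only [tileLeft, decLs_hC]
        exact h
    | onD k h =>
        refine Or.inr (Or.inr (Or.inr (Or.inl ⟨rfl, rfl, ?_, ?_, ?_⟩)))
        · simp only [tileUp, d2_vD]
        · simp only [tileUp, tileBottom, d2_vD]
        · simp only [tileRight, decLs_hC]; exact h
    | onM h =>
        exact Or.inr (Or.inr (Or.inr (Or.inr (Or.inl ⟨rfl, rfl, rfl, rfl, by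
          simp only [tileRight, decLs_hC]; exact h⟩))))
    | onU k h =>
        refine Or.inr (Or.inr (Or.inr (Or.inr (Or.inr (Or.inl ⟨rfl, rfl, ?_, ?_, ?_⟩)))))
        · simp only [tileUp, tileBottom, d2_vU]
        · simp only [tileBottom, d2_vU]
        · simp only [tileRight, decLs_hC]; exact h
    | rs w h h' =>
        refine Or.inr (Or.inr (Or.inr (Or.inr (Or.inr (Or.inr ⟨rfl, rfl, rfl, ?_, ?_, ?_⟩)))))
        · simp only [tileBottom, Nat.unpair_pair]
        · simp only [tileRight, decLs_hC]; exact h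
        · simp only [tileLeft, decLs_hC]; exact h'

end ATileAux
namespace ATileAux

open Nat.Partrec (Code)

instance Qp.decidable (t : WangTile) (pA pB : Bool) : Decidable (Qp t pA pB) := by
  unfold Qp; infer_instance

def qB (x : WangTile × Bool × Bool) : Bool := decide (Qp x.1 x.2.1 x.2.2)

section PrimrecFacts

theorem tileLeft_primrec : Primrec tileLeft := Primrec.fst
theorem tileUp_primrec : Primrec tileUp := Primrec.fst.comp Primrec.snd
theorem tileRight_primrec : Primrec tileRight :=
  Primrec.fst.comp (Primrec.snd.comp Primrec.snd)
theorem tileBottom_primrec : Primrec tileBottom :=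
  Primrec.snd.comp (Primrec.snd.comp Primrec.snd)

theorem decLs_primrec : Primrec decLs :=
  (Primrec.ofNat (List ℕ)).comp (Primrec.snd.comp Primrec.unpair)

theorem extEl_primrec : Primrec extEl :=
  Primrec.list_headI.comp (Primrec.list_reverse.comp decLs_primrec)

theorem d2_primrec : Primrec d2 :=
  Primrec.snd.comp (Primrec.unpair.comp (Primrec.snd.comp Primrec.unpair))

theorem hC_primrec : Primrec (fun σ : List ℕ => hC 2 σ) :=
  Primrec₂.natPair.comp (Primrec.const 2) Primrec.encode

theorem hC_primrec' (tg : ℕ) : Primrec (fun σ : List ℕ => hC tg σ) :=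
  Primrec₂.natPair.comp (Primrec.const tg) Primrec.encode

set_option maxHeartbeats 1000000 in
theorem qB_primrec : Primrec qB := by
  have pL : Primrec fun x : WangTile × Bool × Bool => tileLeft x.1 :=
    tileLeft_primrec.comp Primrec.fst
  have pU : Primrec fun x : WangTile × Bool × Bool => tileUp x.1 :=
    tileUp_primrec.comp Primrec.fst
  have pR : Primrec fun x : WangTile × Bool × Bool => tileRight x.1 :=
    tileRight_primrec.comp Primrec.fst
  have pB' : Primrec fun x : WangTile × Bool × Bool => tileBottom x.1 :=
    tileBottom_primrec.comp Primrec.fst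
  have pa : Primrec fun x : WangTile × Bool × Bool => x.2.1 :=
    Primrec.fst.comp Primrec.snd
  have pb : Primrec fun x : WangTile × Bool × Bool => x.2.2 :=
    Primrec.snd.comp Primrec.snd
  have eqN : PrimrecRel (@Eq ℕ) := Primrec.eq
  have eqB : PrimrecRel (@Eq Bool) := Primrec.eq
  -- clause 1
  have c1 : PrimrecPred fun x : WangTile × Bool × Bool =>
      (tileUp x.1 = vR ∧ tileBottom x.1 = vR ∧
        tileLeft x.1 = hC 2 (decLs (tileLeft x.1)) ∧
        tileRight x.1 = hC 2 (decLs (tileLeft x.1) ++ [extEl (tileRight x.1)]) ∧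
        x.2.1 = true) := by
    refine ((eqN.comp pU (Primrec.const vR)).and
      ((eqN.comp pB' (Primrec.const vR)).and
      ((eqN.comp pL ((hC_primrec' 2).comp (decLs_primrec.comp pL))).and
      ((eqN.comp pR ((hC_primrec' 2).comp
        (Primrec.list_concat.comp (decLs_primrec.comp pL) (extEl_primrec.comp pR)))).and
      (eqB.comp pa (Primrec.const true))))))
  -- clause 2
  have c2 : PrimrecPred fun x : WangTile × Bool × Bool =>
      (tileUp x.1 = vL ∧ tileBottom x.1 = vL ∧
        tileRight x.1 = hC 0 (decLs (tileRight x.1)) ∧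
        tileLeft x.1 = hC 0 (decLs (tileRight x.1) ++ [extEl (tileLeft x.1)])) := by
    refine ((eqN.comp pU (Primrec.const vL)).and
      ((eqN.comp pB' (Primrec.const vL)).and
      ((eqN.comp pR ((hC_primrec' 0).comp (decLs_primrec.comp pR))).and
      (eqN.comp pL ((hC_primrec' 0).comp
        (Primrec.list_concat.comp (decLs_primrec.comp pR) (extEl_primrec.comp pL)))))))
  -- clause 3
  have c3 : PrimrecPred fun x : WangTile × Bool × Bool =>
      (tileUp x.1 = vL ∧ tileBottom x.1 = vL ∧
        tileRight x.1 = hC 1 (decLs (tileRight x.1)) ∧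
        tileLeft x.1 = hC 1 (decLs (tileRight x.1) ++ [extEl (tileLeft x.1)]) ∧
        x.2.2 = false) := by
    refine ((eqN.comp pU (Primrec.const vL)).and
      ((eqN.comp pB' (Primrec.const vL)).and
      ((eqN.comp pR ((hC_primrec' 1).comp (decLs_primrec.comp pR))).and
      ((eqN.comp pL ((hC_primrec' 1).comp
        (Primrec.list_concat.comp (decLs_primrec.comp pR) (extEl_primrec.comp pL)))).and
      (eqB.comp pb (Primrec.const false))))))
  -- clause 4
  have c4 : PrimrecPred fun x : WangTile × Bool × Bool =>
      (tileLeft x.1 = hC 0 [] ∧ tileRight x.1 = hC 2 [] ∧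
        tileUp x.1 = vD (d2 (tileUp x.1)) ∧ tileBottom x.1 = vD (d2 (tileUp x.1) + 1) ∧
        x.2.1 = true) := by
    have pvD : Primrec (fun k : ℕ => vD k) :=
      Primrec₂.natPair.comp (Primrec.const 3)
        (Primrec₂.natPair.comp (Primrec.const 0) Primrec.id)
    refine ((eqN.comp pL (Primrec.const (hC 0 []))).and
      ((eqN.comp pR (Primrec.const (hC 2 []))).and
      ((eqN.comp pU (pvD.comp (d2_primrec.comp pU))).and
      ((eqN.comp pB' (pvD.comp (Primrec.succ.comp (d2_primrec.comp pU)))).and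
      (eqB.comp pa (Primrec.const true))))))
  -- clause 5
  have c5 : PrimrecPred fun x : WangTile × Bool × Bool =>
      (tileLeft x.1 = hC 0 [] ∧ tileRight x.1 = hC 2 [] ∧
        tileUp x.1 = vU 0 ∧ tileBottom x.1 = vD 0 ∧ x.2.1 = true) := by
    refine ((eqN.comp pL (Primrec.const (hC 0 []))).and
      ((eqN.comp pR (Primrec.const (hC 2 []))).and
      ((eqN.comp pU (Primrec.const (vU 0))).and
      ((eqN.comp pB' (Primrec.const (vD 0))).and
      (eqB.comp pa (Primrec.const true))))))
  -- clause 6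
  have c6 : PrimrecPred fun x : WangTile × Bool × Bool =>
      (tileLeft x.1 = hC 0 [] ∧ tileRight x.1 = hC 2 [] ∧
        tileUp x.1 = vU (d2 (tileBottom x.1) + 1) ∧
        tileBottom x.1 = vU (d2 (tileBottom x.1)) ∧ x.2.1 = true) := by
    have pvU : Primrec (fun k : ℕ => vU k) :=
      Primrec₂.natPair.comp (Primrec.const 3)
        (Primrec₂.natPair.comp (Primrec.const 1) Primrec.id)
    refine ((eqN.comp pL (Primrec.const (hC 0 []))).and
      ((eqN.comp pR (Primrec.const (hC 2 []))).and
      ((eqN.comp pU (pvU.comp (Primrec.succ.comp (d2_primrec.comp pB')))).and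
      ((eqN.comp pB' (pvU.comp (d2_primrec.comp pB'))).and
      (eqB.comp pa (Primrec.const true))))))
  -- clause 7
  have c7 : PrimrecPred fun x : WangTile × Bool × Bool =>
      (tileLeft x.1 = hC 1 [] ∧ tileRight x.1 = hC 2 [] ∧ tileUp x.1 = vD 0 ∧
        tileBottom x.1 = Nat.pair 3 (tileBottom x.1).unpair.2 ∧
        x.2.1 = true ∧ x.2.2 = false) := by
    refine ((eqN.comp pL (Primrec.const (hC 1 []))).and
      ((eqN.comp pR (Primrec.const (hC 2 []))).and
      ((eqN.comp pU (Primrec.const (vD 0))).and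
      ((eqN.comp pB' (Primrec₂.natPair.comp (Primrec.const 3)
        (Primrec.snd.comp (Primrec.unpair.comp pB')))).and
      ((eqB.comp pa (Primrec.const true)).and
      (eqB.comp pb (Primrec.const false)))))))
  have call : PrimrecPred fun x : WangTile × Bool × Bool => Qp x.1 x.2.1 x.2.2 :=
    (c1.or (c2.or (c3.or (c4.or (c5.or (c6.or c7)))))).of_eq fun x => by rw [Qp]
  exact call.decide

end PrimrecFacts

def acceptT (a b : List ℕ → Bool) (t : WangTile) : Bool :=
  qB (t, a (decLs (tileRight t)), b (decLs (tileLeft t)))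

theorem acceptT_iff {a b : List ℕ → Bool} (t : WangTile) :
    acceptT a b t = true ↔ Mem a b t := by
  rw [acceptT, qB, decide_eq_true_iff]
  exact Qp_iff_mem t

/-- The (total) function whose code we will curry. -/
def GF (RA RB : ℕ × List ℕ → Bool) (k : ℕ) : ℕ :=
  bif acceptT (fun σ => RA (k.unpair.1, σ)) (fun σ => RB (k.unpair.1, σ))
    (Denumerable.ofNat WangTile k.unpair.2) then 1 else 0

theorem GF_computable {RA RB : ℕ × List ℕ → Bool}
    (hRA : Computable RA) (hRB : Computable RB) : Computable (GF RA RB) := by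
  have ht : Primrec fun k : ℕ => Denumerable.ofNat WangTile k.unpair.2 :=
    (Primrec.ofNat WangTile).comp (Primrec.snd.comp Primrec.unpair)
  have hn : Primrec fun k : ℕ => k.unpair.1 := Primrec.fst.comp Primrec.unpair
  have h1 : Computable fun k : ℕ =>
      RA (k.unpair.1, decLs (tileRight (Denumerable.ofNat WangTile k.unpair.2))) :=
    hRA.comp (hn.pair (decLs_primrec.comp (tileRight_primrec.comp ht))).to_comp
  have h2 : Computable fun k : ℕ =>
      RB (k.unpair.1, decLs (tileLeft (Denumerable.ofNat WangTile k.unpair.2))) :=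
    hRB.comp (hn.pair (decLs_primrec.comp (tileLeft_primrec.comp ht))).to_comp
  have hq : Computable fun k : ℕ =>
      acceptT (fun σ => RA (k.unpair.1, σ)) (fun σ => RB (k.unpair.1, σ))
        (Denumerable.ofNat WangTile k.unpair.2) :=
    qB_primrec.to_comp.comp (ht.to_comp.pair (h1.pair h2))
  exact Computable.cond hq (Computable.const 1) (Computable.const 0)

end ATileAux
namespace ATileAux

theorem GF_zero_or_one (RA RB : ℕ × List ℕ → Bool) (k : ℕ) :
    GF RA RB k = 0 ∨ GF RA RB k = 1 := by
  unfold GF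
  cases acceptT (fun σ => RA (k.unpair.1, σ)) (fun σ => RB (k.unpair.1, σ))
    (Denumerable.ofNat WangTile k.unpair.2) <;> simp

theorem one_eq_GF_iff (RA RB : ℕ × List ℕ → Bool) (n : ℕ) (t : WangTile) :
    1 = GF RA RB (Nat.pair n (Encodable.encode t)) ↔
      Mem (fun σ => RA (n, σ)) (fun σ => RB (n, σ)) t := by
  unfold GF
  simp only [Nat.unpair_pair, Denumerable.ofNat_encode]
  cases hx : acceptT (fun σ => RA (n, σ)) (fun σ => RB (n, σ)) t with
  | false =>
      simp only [Bool.cond_false]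
      exact iff_of_false (by norm_num)
        (fun hmem => by rw [← acceptT_iff t] at hmem; simp [hmem] at hx)
  | true =>
      simp only [Bool.cond_true]
      exact iff_of_true trivial ((acceptT_iff t).mp hx)

end ATileAux
/-- Every intersection of a `Σ¹₁` set with a `Π¹₁` set is many-one reducible to `ATile`. -/
theorem sigma11_inter_pi11_manyOneReducible_ATile (X A B : Set ℕ)
    (hX : X = A ∩ B) (hA : Sigma11 A) (hB : Pi11 B) :
    (· ∈ X) ≤₀ (· ∈ ATile) := by
  obtain ⟨RA, hRAc, hRA⟩ := hA
  obtain ⟨RB, hRBc, hRB⟩ := hB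
  have hG : Computable (ATileAux.GF RA RB) := ATileAux.GF_computable hRAc hRBc
  have hGp : Nat.Partrec (fun k => Part.some (ATileAux.GF RA RB k) : ℕ →. ℕ) :=
    Partrec.nat_iff.mp hG
  obtain ⟨c, hc⟩ := Nat.Partrec.Code.exists_code.mp hGp
  refine ⟨fun n => Encodable.encode (c.curry n), ?_, ?_⟩
  · exact Primrec.to_comp (Primrec.encode.comp
      (Nat.Partrec.Code.primrec₂_curry.comp (Primrec.const c) Primrec.id))
  · intro n
    have keyPhi : ∀ m : ℕ, Phi (Encodable.encode (c.curry n)) m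
        = Part.some (ATileAux.GF RA RB (Nat.pair n m)) := by
      intro m
      show (Denumerable.ofNat Nat.Partrec.Code (Encodable.encode (c.curry n))).eval m = _
      rw [Denumerable.ofNat_encode, Nat.Partrec.Code.eval_curry, hc]
    have hTotal : PhiTotalBool (Encodable.encode (c.curry n)) := by
      intro m
      refine ⟨ATileAux.GF RA RB (Nat.pair n m), ?_, ?_⟩
      · rw [keyPhi m]; exact Part.mem_some _
      · exact ATileAux.GF_zero_or_one RA RB _
    have hset : PhiTileSet (Encodable.encode (c.curry n)) =
        ATileAux.TS (fun σ => RA (n, σ)) (fun σ => RB (n, σ)) := by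
      ext t
      show 1 ∈ Phi _ (Encodable.encode t) ↔ _
      rw [keyPhi (Encodable.encode t), Part.mem_some_iff]
      exact ATileAux.one_eq_GF_iff RA RB n t
    have hmain := ATileAux.main_iff (fun σ => RA (n, σ)) (fun σ => RB (n, σ))
    subst hX
    constructor
    · rintro ⟨hnA, hnB⟩
      refine ⟨hTotal, ?_⟩
      rw [hset]
      refine hmain.mp ⟨?_, ?_⟩
      · obtain ⟨f0, hf0⟩ := (hRA n).mp hnA
        exact ⟨f0, fun k => hf0 k⟩
      · intro g
        obtain ⟨k, hk⟩ := (hRB n).mp hnB g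
        exact ⟨k, hk⟩
    · rintro ⟨-, hEx, hAp⟩
      rw [hset] at hEx hAp
      have h2 := hmain.mpr ⟨hEx, hAp⟩
      exact ⟨(hRA n).mpr ⟨h2.1.choose, fun k => h2.1.choose_spec k⟩,
        (hRB n).mpr fun g => ⟨(h2.2 g).choose, (h2.2 g).choose_spec⟩⟩
end

section
/- If X ⊆ ℕ has the form X = A ∩ B, where A ⊆ ℕ is Σ¹₁ and B ⊆ ℕ is Π¹₁, then X ≤_m PTile. -/
def PTile : Set ℕ :=
  {e | PhiTotalBool e ∧ (∃ f : ℤ × ℤ → WangTile, IsTiling (PhiTileSet e) Set.univ f) ∧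
    ∀ f : ℤ × ℤ → WangTile, IsTiling (PhiTileSet e) Set.univ f → IsPeriodic f}

namespace PT

def hpad (tag k : ℕ) : ℕ := Nat.pair tag (Nat.pair 0 k)
def hnode (tag : ℕ) (σ : List ℕ) : ℕ := Nat.pair tag (Nat.pair 1 (Encodable.encode σ))
def vcol (tag : ℕ) (rig : Bool) (w : ℕ) : ℕ := Nat.pair tag (Nat.pair 2 (bif rig then w else 0))

def padT (tag : ℕ) (rig : Bool) (k : ℕ) : WangTile :=
  (hpad tag (k+1), vcol tag rig (Nat.pair 0 k), hpad tag k, vcol tag rig (Nat.pair 0 k))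
def bndT (tag : ℕ) (rig : Bool) : WangTile :=
  (hpad tag 0, vcol tag rig (Nat.pair 1 0), hnode tag [], vcol tag rig (Nat.pair 1 0))
def climbT (tag : ℕ) (rig : Bool) (ρ : List ℕ) : WangTile :=
  (hnode tag ρ.dropLast, vcol tag rig (Nat.pair 2 (Encodable.encode ρ)),
   hnode tag ρ, vcol tag rig (Nat.pair 2 (Encodable.encode ρ)))

def kof (t : WangTile) : ℕ := (Nat.unpair (Nat.unpair t.2.2.1).2).2
def ρof (t : WangTile) : List ℕ := Denumerable.ofNat (List ℕ) (kof t)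

def compMem (tag : ℕ) (rig : Bool) (a : List ℕ → Bool) (t : WangTile) : Bool :=
  (decide (t = padT tag rig (kof t))) || (a [] && decide (t = bndT tag rig)) ||
  (decide (ρof t ≠ []) && a (ρof t) && decide (t = climbT tag rig (ρof t)))

@[simp] lemma hpad_inj {tag k k'} : hpad tag k = hpad tag k' ↔ k = k' := by
  simp [hpad, Nat.pair_eq_pair]

@[simp] lemma hnode_inj {tag σ σ'} : hnode tag σ = hnode tag σ' ↔ σ = σ' := by
  simp [hnode, Nat.pair_eq_pair]

lemma hpad_ne_hnode {tag tag' k σ} : hpad tag k ≠ hnode tag' σ := by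
  simp [hpad, hnode, Nat.pair_eq_pair]

@[simp] lemma vcol_inj_rig {tag w w'} : vcol tag true w = vcol tag true w' ↔ w = w' := by
  simp [vcol, Nat.pair_eq_pair]

lemma padT_ne_bndT {tag rig rig' k} : padT tag rig k ≠ bndT tag rig' := by
  intro h
  have := congrArg Prod.fst h
  simp only [padT, bndT, hpad, Nat.pair_eq_pair] at this
  omega

lemma climbT_ne_bndT {tag rig rig' ρ} : climbT tag rig ρ ≠ bndT tag rig' := by
  intro h
  have := congrArg Prod.fst h
  simp only [climbT, bndT] at this
  exact hpad_ne_hnode this.symm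

lemma climbT_ne_padT {tag rig rig' ρ k} : climbT tag rig ρ ≠ padT tag rig' k := by
  intro h
  have := congrArg Prod.fst h
  simp only [climbT, padT] at this
  exact hpad_ne_hnode this.symm

lemma climbT_inj {tag rig ρ ρ'} (h : climbT tag rig ρ = climbT tag rig ρ') : ρ = ρ' := by
  have := congrArg (fun t : WangTile => t.2.2.1) h
  simpa [climbT] using this

lemma kof_padT {tag rig k} : kof (padT tag rig k) = k := by
  simp [kof, padT, hpad, Nat.unpair_pair]

lemma ρof_climbT {tag rig ρ} : ρof (climbT tag rig ρ) = ρ := by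
  show Denumerable.ofNat (List ℕ) ((Nat.unpair (Nat.unpair (hnode tag ρ)).2).2) = ρ
  simp only [hnode, Nat.unpair_pair]
  exact Denumerable.ofNat_encode ρ

lemma compMem_iff {tag rig a t} : compMem tag rig a t = true ↔
    (∃ k, t = padT tag rig k) ∨ (a [] = true ∧ t = bndT tag rig) ∨
    (∃ ρ, ρ ≠ [] ∧ a ρ = true ∧ t = climbT tag rig ρ) := by
  constructor
  · intro h
    simp only [compMem, Bool.or_eq_true, Bool.and_eq_true, decide_eq_true_eq] at h
    rcases h with (h | h) | h
    · exact Or.inl ⟨_, h⟩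
    · exact Or.inr (Or.inl ⟨h.1, h.2⟩)
    · exact Or.inr (Or.inr ⟨_, h.1.1, h.1.2, h.2⟩)
  · intro h
    simp only [compMem, Bool.or_eq_true, Bool.and_eq_true, decide_eq_true_eq]
    rcases h with ⟨k, rfl⟩ | ⟨ha, rfl⟩ | ⟨ρ, hne, ha, rfl⟩
    · exact Or.inl (Or.inl (by rw [kof_padT]))
    · exact Or.inl (Or.inr ⟨ha, rfl⟩)
    · exact Or.inr (by rw [ρof_climbT]; exact ⟨⟨hne, ha⟩, rfl⟩)

end PT
namespace PT

lemma range_map_succ (f : ℕ → ℕ) (j : ℕ) :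
    (List.range (j+1)).map f = (List.range j).map f ++ [f j] := by
  rw [List.range_succ, List.map_append]; rfl

lemma dropLast_range_map (f : ℕ → ℕ) (j : ℕ) :
    ((List.range (j+1)).map f).dropLast = (List.range j).map f := by
  rw [range_map_succ, List.dropLast_concat]

/-- Row analysis: a bi-infinite matching row of component tiles yields a path. -/
theorem row_path {tag : ℕ} {rig : Bool} {a : List ℕ → Bool} (t : ℤ → WangTile)
    (hm : ∀ x, compMem tag rig a (t x) = true)
    (hh : ∀ x, tileRight (t x) = tileLeft (t (x+1))) :
    ∃ f : ℕ → ℕ, ∀ k, a ((List.range k).map f) = true := by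
  have ht : ∀ x, (∃ k, t x = padT tag rig k) ∨ (a [] = true ∧ t x = bndT tag rig) ∨
      (∃ ρ, ρ ≠ [] ∧ a ρ = true ∧ t x = climbT tag rig ρ) := fun x => compMem_iff.mp (hm x)
  -- descent: a climb tile has a boundary tile to its left
  have desc : ∀ (N : ℕ) (ρ : List ℕ) (x : ℤ), ρ.length ≤ N → ρ ≠ [] →
      t x = climbT tag rig ρ → ∃ x₀ : ℤ, t x₀ = bndT tag rig := by
    intro N
    induction N with
    | zero => intro ρ x hl hne _; exact absurd (List.length_eq_zero_iff.mp (Nat.le_zero.mp hl)) hne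
    | succ N ih =>
      intro ρ x hl hne hc
      have hmatch := hh (x - 1)
      rw [sub_add_cancel, hc] at hmatch
      simp only [climbT, tileLeft] at hmatch
      rcases ht (x - 1) with ⟨k, hk⟩ | ⟨_, hb⟩ | ⟨ρ', hne', _, hc'⟩
      · rw [hk] at hmatch
        exact absurd hmatch (by simp only [padT, tileRight]; exact hpad_ne_hnode)
      · exact ⟨x - 1, hb⟩
      · rw [hc'] at hmatch
        simp only [climbT, tileRight] at hmatch
        have hρ' : ρ' = ρ.dropLast := hnode_inj.mp hmatch
        have hlen : ρ'.length ≤ N := by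
          rw [hρ', List.length_dropLast]
          have : 1 ≤ ρ.length := List.length_pos_iff.mpr hne
          omega
        exact ih ρ' (x - 1) hlen hne' hc'
  -- Step 1: there is a boundary tile somewhere
  have hbnd : ∃ x₀ : ℤ, t x₀ = bndT tag rig := by
    by_cases hall : ∀ x, ∃ k, t x = padT tag rig k
    · exfalso
      choose κ hκ using hall
      have hstep : ∀ x : ℤ, κ x = κ (x+1) + 1 := by
        intro x
        have h := hh x
        rw [hκ x, hκ (x+1)] at h
        simp only [padT, tileRight, tileLeft] at h
        have := hpad_inj.mp h
        omega
      have hdesc : ∀ j : ℕ, κ 0 = κ (j : ℤ) + j := by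
        intro j
        induction j with
        | zero => simp
        | succ j ih =>
          have := hstep (j : ℤ)
          push_cast
          push_cast at ih
          omega
      have := hdesc (κ 0 + 1)
      omega
    · push_neg at hall
      obtain ⟨x₁, hx₁⟩ := hall
      rcases ht x₁ with ⟨k, hk⟩ | ⟨_, hb⟩ | ⟨ρ, hne, _, hc⟩
      · exact absurd hk (hx₁ k)
      · exact ⟨x₁, hb⟩
      · exact desc ρ.length ρ x₁ le_rfl hne hc
  obtain ⟨x₀, hx₀⟩ := hbnd
  -- a [] holds
  have ha0 : a [] = true := by
    rcases ht x₀ with ⟨k, hk⟩ | ⟨h0, _⟩ | ⟨ρ, _, _, hc⟩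
    · exact absurd (hx₀ ▸ hk : bndT tag rig = padT tag rig k).symm padT_ne_bndT
    · exact h0
    · exact absurd (hx₀ ▸ hc : bndT tag rig = climbT tag rig ρ).symm climbT_ne_bndT
  -- Step 2: the chain of climb tiles to the right
  have key : ∀ j : ℕ, ∃ ρ : List ℕ, ρ.length = j + 1 ∧ t (x₀ + 1 + j) = climbT tag rig ρ := by
    intro j
    induction j with
    | zero =>
      have hmatch := hh x₀
      rw [hx₀] at hmatch
      simp only [bndT, tileRight] at hmatch
      rcases ht (x₀ + 1) with ⟨k, hk⟩ | ⟨_, hb⟩ | ⟨ρ, hne, _, hc⟩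
      · rw [hk] at hmatch; exact absurd hmatch.symm (by simp only [padT, tileLeft]; exact hpad_ne_hnode)
      · rw [hb] at hmatch; exact absurd hmatch.symm (by simp only [bndT, tileLeft]; exact hpad_ne_hnode)
      · rw [hc] at hmatch
        simp only [climbT, tileLeft] at hmatch
        have hd : ρ.dropLast = [] := (hnode_inj.mp hmatch).symm
        have hlen : ρ.length = 1 := by
          have h1 := List.length_dropLast (xs := ρ)
          rw [hd] at h1
          have : 1 ≤ ρ.length := List.length_pos_iff.mpr hne
          simp at h1; omega
        exact ⟨ρ, hlen, by simpa using hc⟩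
    | succ j ih =>
      obtain ⟨ρ, hlen, hc⟩ := ih
      have hmatch := hh (x₀ + 1 + j)
      rw [hc] at hmatch
      simp only [climbT, tileRight] at hmatch
      have harith : x₀ + 1 + (j : ℤ) + 1 = x₀ + 1 + ((j : ℕ) + 1 : ℕ) := by push_cast; ring
      rcases ht (x₀ + 1 + j + 1) with ⟨k, hk⟩ | ⟨_, hb⟩ | ⟨ρ', hne', _, hc'⟩
      · rw [hk] at hmatch; exact absurd hmatch.symm (by simp only [padT, tileLeft]; exact hpad_ne_hnode)
      · rw [hb] at hmatch; exact absurd hmatch.symm (by simp only [bndT, tileLeft]; exact hpad_ne_hnode)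
      · rw [hc'] at hmatch
        simp only [climbT, tileLeft] at hmatch
        have hd : ρ'.dropLast = ρ := (hnode_inj.mp hmatch).symm
        have hlen' : ρ'.length = (j + 1) + 1 := by
          have h1 := List.length_dropLast (xs := ρ')
          rw [hd, hlen] at h1
          have : 1 ≤ ρ'.length := List.length_pos_iff.mpr hne'
          omega
        exact ⟨ρ', hlen', by rw [← harith]; exact hc'⟩
  choose ρs hρlen hρc using key
  have hρne : ∀ j, ρs j ≠ [] := fun j =>
    List.ne_nil_of_length_pos (by rw [hρlen]; omega)
  -- coherence
  have hcoh : ∀ j : ℕ, (ρs (j+1)).dropLast = ρs j := by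
    intro j
    have hmatch := hh (x₀ + 1 + j)
    rw [hρc j] at hmatch
    have harith : x₀ + 1 + (j : ℤ) + 1 = x₀ + 1 + ((j : ℕ) + 1 : ℕ) := by push_cast; ring
    rw [harith, hρc (j+1)] at hmatch
    simp only [climbT, tileRight, tileLeft] at hmatch
    exact (hnode_inj.mp hmatch).symm
  -- acceptance
  have haj : ∀ j : ℕ, a (ρs j) = true := by
    intro j
    rcases ht (x₀ + 1 + j) with ⟨k, hk⟩ | ⟨_, hb⟩ | ⟨ρ', _, ha', hc'⟩
    · exact absurd ((hρc j).symm.trans hk) climbT_ne_padT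
    · exact absurd ((hρc j).symm.trans hb) climbT_ne_bndT
    · rw [climbT_inj ((hρc j).symm.trans hc')]; exact ha'
  refine ⟨fun j => (ρs j).getLast (hρne j), ?_⟩
  have hG : ∀ j : ℕ, (List.range (j+1)).map (fun j => (ρs j).getLast (hρne j)) = ρs j := by
    intro j
    induction j with
    | zero =>
      have h := List.dropLast_append_getLast (hρne 0)
      have hd : (ρs 0).dropLast = [] := by
        have := List.length_dropLast (xs := ρs 0)
        rw [hρlen 0] at this
        exact List.length_eq_zero_iff.mp (by omega)
      rw [hd] at h
      rw [show (List.range 1) = [0] from rfl]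
      simpa using h
    | succ j ih =>
      rw [range_map_succ, ih]
      have h := List.dropLast_append_getLast (hρne (j+1))
      rw [hcoh j] at h
      exact h
  intro k
  cases k with
  | zero => simpa using ha0
  | succ j => rw [hG j]; exact haj j

end PT
namespace PT

def rowT (tag : ℕ) (rig : Bool) (f : ℕ → ℕ) (b x : ℤ) : WangTile :=
  if x < b then padT tag rig (b - 1 - x).toNat
  else if x = b then bndT tag rig
  else climbT tag rig ((List.range (x - b).toNat).map f)

lemma rowT_mem {tag rig a f} (hf : ∀ k, a ((List.range k).map f) = true) (b x : ℤ) :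
    compMem tag rig a (rowT tag rig f b x) = true := by
  apply compMem_iff.mpr
  unfold rowT
  split_ifs with h1 h2
  · exact Or.inl ⟨_, rfl⟩
  · exact Or.inr (Or.inl ⟨by simpa using hf 0, rfl⟩)
  · refine Or.inr (Or.inr ⟨_, ?_, hf _, rfl⟩)
    have : (x - b).toNat ≠ 0 := by omega
    simp [List.map_eq_nil_iff, List.range_eq_nil, this]

lemma rowT_match {tag rig f b} (x : ℤ) :
    tileRight (rowT tag rig f b x) = tileLeft (rowT tag rig f b (x+1)) := by
  unfold rowT
  rcases lt_trichotomy x b with h | h | h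
  · rcases eq_or_lt_of_le (Int.add_one_le_iff.mpr h) with h2 | h2
    · -- x + 1 = b
      rw [if_pos h, if_neg (by omega : ¬ x + 1 < b), if_pos h2]
      simp only [padT, bndT, tileRight, tileLeft]
      congr 1
      omega
    · -- x + 1 < b
      rw [if_pos h, if_pos h2]
      simp only [padT, tileRight, tileLeft]
      congr 1
      omega
  · -- x = b
    rw [if_neg (by omega), if_pos h, if_neg (by omega), if_neg (by omega)]
    simp only [bndT, climbT, tileRight, tileLeft]
    congr 1
    have : (x + 1 - b).toNat = 1 := by omega
    rw [this]
    rfl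
  · -- x > b
    rw [if_neg (by omega), if_neg (by omega), if_neg (by omega), if_neg (by omega)]
    simp only [climbT, tileRight, tileLeft]
    congr 1
    have h1 : (x + 1 - b).toNat = (x - b).toNat + 1 := by omega
    rw [h1, dropLast_range_map]

lemma rowT_eq_bndT_iff {tag rig f b x} : rowT tag rig f b x = bndT tag rig ↔ x = b := by
  unfold rowT
  split_ifs with h1 h2
  · exact iff_of_false padT_ne_bndT (by omega)
  · simp [h2]
  · exact iff_of_false climbT_ne_bndT (by push_neg at h1 h2; omega)

lemma tile_ub {tag rig a t} (h : compMem tag rig a t = true) : tileUp t = tileBottom t := by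
  rcases compMem_iff.mp h with ⟨k, rfl⟩ | ⟨_, rfl⟩ | ⟨ρ, _, _, rfl⟩ <;> rfl

lemma rigid_vert {tag a a' t t'} (h : compMem tag true a t = true)
    (h' : compMem tag true a' t' = true) (he : tileUp t = tileBottom t') : t' = t := by
  rcases compMem_iff.mp h with ⟨k, rfl⟩ | ⟨_, rfl⟩ | ⟨ρ, _, _, rfl⟩ <;>
    rcases compMem_iff.mp h' with ⟨k', rfl⟩ | ⟨_, rfl⟩ | ⟨ρ', _, _, rfl⟩ <;>
    simp only [padT, bndT, climbT, tileUp, tileBottom, vcol_inj_rig, Nat.pair_eq_pair] at he <;>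
    first
    | (obtain ⟨h1, h2⟩ := he; omega)
    | (obtain ⟨h1, h2⟩ := he; subst h2; rfl)
    | (obtain ⟨h1, h2⟩ := he
       have := Encodable.encode_injective (α := List ℕ) h2.symm
       subst this; rfl)
    | rfl

lemma nonrigid_up {tag a t} (h : compMem tag false a t = true) :
    tileUp t = Nat.pair tag (Nat.pair 2 0) := by
  rcases compMem_iff.mp h with ⟨k, rfl⟩ | ⟨_, rfl⟩ | ⟨ρ, _, _, rfl⟩ <;> rfl

lemma nonrigid_bottom {tag a t} (h : compMem tag false a t = true) :
    tileBottom t = Nat.pair tag (Nat.pair 2 0) := by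
  rcases compMem_iff.mp h with ⟨k, rfl⟩ | ⟨_, rfl⟩ | ⟨ρ, _, _, rfl⟩ <;> rfl

lemma tag_of {tag rig a t} (h : compMem tag rig a t = true) :
    (Nat.unpair (tileLeft t)).1 = tag ∧ (Nat.unpair (tileRight t)).1 = tag ∧
    (Nat.unpair (tileUp t)).1 = tag ∧ (Nat.unpair (tileBottom t)).1 = tag := by
  rcases compMem_iff.mp h with ⟨k, rfl⟩ | ⟨_, rfl⟩ | ⟨ρ, _, _, rfl⟩ <;>
    simp [padT, bndT, climbT, hpad, hnode, vcol, tileLeft, tileRight, tileUp, tileBottom,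
      Nat.unpair_pair]

def STilesB (a b : List ℕ → Bool) (t : WangTile) : Bool :=
  compMem 0 true a t || compMem 1 false b t

def Sset (a b : List ℕ → Bool) : Set WangTile := {t | STilesB a b t = true}

lemma mem_Sset {a b t} : t ∈ Sset a b ↔
    compMem 0 true a t = true ∨ compMem 1 false b t = true := by
  simp [Sset, STilesB]

/-- Propagation of a locally constant property on the grid. -/
lemma grid_const (P : ℤ × ℤ → Prop)
    (hx : ∀ x y : ℤ, P (x, y) ↔ P (x+1, y)) (hy : ∀ x y : ℤ, P (x, y) ↔ P (x, y+1)) :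
    ∀ p : ℤ × ℤ, (P p ↔ P (0, 0)) := by
  have hrow : ∀ x y : ℤ, P (x, y) ↔ P (0, y) := by
    intro x y
    induction x using Int.induction_on with
    | zero => rfl
    | succ k ih => rw [← hx k y]; exact ih
    | pred k ih => rw [hx (-k - 1) y]; simpa using ih
  intro ⟨x, y⟩
  rw [hrow x y]
  induction y using Int.induction_on with
  | zero => rfl
  | succ k ih => rw [← hy 0 k]; exact ih
  | pred k ih => rw [hy 0 (-k - 1)]; simpa using ih

theorem separation {a b} {F : ℤ × ℤ → WangTile}
    (hT : IsTiling (Sset a b) Set.univ F) :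
    (∀ p, compMem 0 true a (F p) = true) ∨ (∀ p, compMem 1 false b (F p) = true) := by
  obtain ⟨hmem, hhor, hver⟩ := hT
  have hd : ∀ p, compMem 0 true a (F p) = true ∨ compMem 1 false b (F p) = true :=
    fun p => mem_Sset.mp (hmem p trivial)
  set P : ℤ × ℤ → Prop := fun p => compMem 0 true a (F p) = true with hP
  have hiff : ∀ p q : ℤ × ℤ,
      ((Nat.unpair (tileRight (F p))).1 = (Nat.unpair (tileLeft (F q))).1 ∨
       (Nat.unpair (tileUp (F p))).1 = (Nat.unpair (tileBottom (F q))).1) → (P p ↔ P q) := by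
    intro p q htag
    constructor
    · intro hp
      rcases hd q with h | h
      · exact h
      · exfalso
        have t1 := tag_of hp
        have t2 := tag_of h
        rcases htag with he | he <;> omega
    · intro hq
      rcases hd p with h | h
      · exact h
      · exfalso
        have t1 := tag_of h
        have t2 := tag_of hq
        rcases htag with he | he <;> omega
  have hx : ∀ x y : ℤ, P (x, y) ↔ P (x+1, y) := fun x y =>
    hiff _ _ (Or.inl (by rw [hhor x y trivial trivial]))
  have hy : ∀ x y : ℤ, P (x, y) ↔ P (x, y+1) := fun x y =>
    hiff _ _ (Or.inr (by rw [hver x y trivial trivial]))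
  have hconst := grid_const P hx hy
  by_cases h0 : P (0, 0)
  · exact Or.inl fun p => (hconst p).mpr h0
  · refine Or.inr fun p => ?_
    rcases hd p with h | h
    · exact absurd ((hconst p).mp h) h0
    · exact h

end PT
namespace PT

theorem tilingA_exists {a b : List ℕ → Bool} {f : ℕ → ℕ}
    (hf : ∀ k, a ((List.range k).map f) = true) :
    IsTiling (Sset a b) Set.univ (fun p => rowT 0 true f (-1) p.1) := by
  refine ⟨fun p _ => mem_Sset.mpr (Or.inl (rowT_mem hf _ _)), ?_, ?_⟩
  · intro x y _ _
    exact rowT_match x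
  · intro x y _ _
    exact tile_ub (rowT_mem hf (-1) x)

theorem all_periodic {a b : List ℕ → Bool} {F : ℤ × ℤ → WangTile}
    (hT : IsTiling (Sset a b) Set.univ F)
    (hnb : ¬ ∃ g : ℕ → ℕ, ∀ k, b ((List.range k).map g) = true) : IsPeriodic F := by
  rcases separation hT with hA | hB
  · refine ⟨(0, 1), by simp, ?_⟩
    rintro ⟨x, y⟩
    have hver := hT.2.2 x y trivial trivial
    have hpt : ((x, y) + (0, 1) : ℤ × ℤ) = (x, y + 1) := by simp
    rw [hpt]
    exact rigid_vert (hA (x, y)) (hA (x, y+1)) hver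
  · exfalso
    exact hnb (row_path (fun x => F (x, 0)) (fun x => hB (x, 0))
      (fun x => hT.2.1 x 0 trivial trivial))

def bpos (y : ℤ) : ℤ := if 0 ≤ y then -1 else y

theorem tilingB {a b : List ℕ → Bool} {g : ℕ → ℕ}
    (hg : ∀ k, b ((List.range k).map g) = true) :
    IsTiling (Sset a b) Set.univ (fun p => rowT 1 false g (bpos p.2) p.1) ∧
    ¬ IsPeriodic (fun p : ℤ × ℤ => rowT 1 false g (bpos p.2) p.1) := by
  constructor
  · refine ⟨fun p _ => mem_Sset.mpr (Or.inr (rowT_mem hg _ _)), ?_, ?_⟩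
    · intro x y _ _
      exact rowT_match x
    · intro x y _ _
      rw [nonrigid_up (rowT_mem hg (bpos y) x), nonrigid_bottom (rowT_mem hg (bpos (y+1)) x)]
  · rintro ⟨⟨vx, vy⟩, hv0, hv⟩
    have hbnd : ∀ y : ℤ, bpos y + vx = bpos (y + vy) := by
      intro y
      have h1 := hv (bpos y, y)
      have h2 : rowT 1 false g (bpos y) (bpos y) = bndT 1 false := rowT_eq_bndT_iff.mpr rfl
      have h3 : rowT 1 false g (bpos (y + vy)) (bpos y + vx) = bndT 1 false := by
        rw [show ((bpos y, y) + (vx, vy) : ℤ × ℤ) = (bpos y + vx, y + vy) from rfl] at h1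
        simpa [h2] using h1
      exact rowT_eq_bndT_iff.mp h3
    have hvx : vx = 0 := by
      rcases le_or_gt 0 vy with h | h
      · have := hbnd 0
        simp only [bpos] at this
        rw [if_pos le_rfl, if_pos (by omega : (0:ℤ) ≤ 0 + vy)] at this
        omega
      · have := hbnd (-vy)
        simp only [bpos] at this
        rw [if_pos (by omega : (0:ℤ) ≤ -vy), if_pos (by omega : (0:ℤ) ≤ -vy + vy)] at this
        omega
    have hvy : vy = 0 := by
      by_contra hne
      rcases lt_or_gt_of_ne hne with h | h
      · have := hbnd (-1)
        simp only [bpos] at this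
        rw [if_neg (by omega), if_neg (by omega)] at this
        omega
      · have := hbnd (-1 - vy)
        simp only [bpos] at this
        rw [if_neg (by omega), if_neg (by omega)] at this
        omega
    apply hv0
    simp [hvx, hvy, Prod.ext_iff]

theorem tiling_iff (a b : List ℕ → Bool) :
    ((∃ f : ℕ → ℕ, ∀ k, a ((List.range k).map f) = true) ∧
      ¬ (∃ g : ℕ → ℕ, ∀ k, b ((List.range k).map g) = true)) ↔
    ((∃ F : ℤ × ℤ → WangTile, IsTiling (Sset a b) Set.univ F) ∧
      ∀ F : ℤ × ℤ → WangTile, IsTiling (Sset a b) Set.univ F → IsPeriodic F) := by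
  constructor
  · rintro ⟨⟨f, hf⟩, hnb⟩
    exact ⟨⟨_, tilingA_exists hf⟩, fun F hF => all_periodic hF hnb⟩
  · rintro ⟨⟨F, hF⟩, hper⟩
    have hnb : ¬ ∃ g : ℕ → ℕ, ∀ k, b ((List.range k).map g) = true := by
      rintro ⟨g, hg⟩
      obtain ⟨hT, hnp⟩ := tilingB (a := a) hg
      exact hnp (hper _ hT)
    refine ⟨?_, hnb⟩
    rcases separation hF with hA | hB
    · exact row_path (fun x => F (x, 0)) (fun x => hA (x, 0))
        (fun x => hF.2.1 x 0 trivial trivial)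
    · exact absurd (row_path (fun x => F (x, 0)) (fun x => hB (x, 0))
        (fun x => hF.2.1 x 0 trivial trivial)) hnb

end PT
namespace PT

/-- `acc R n σ`: all prefixes of `σ` are accepted by `R n`. -/
def acc (R : ℕ × List ℕ → Bool) (n : ℕ) (σ : List ℕ) : Bool :=
  Nat.rec true (fun j b => b && R (n, (List.range j).map (fun i => σ.getD i 0))) (σ.length + 1)

lemma range_map_getD (σ : List ℕ) : ∀ j, j ≤ σ.length →
    (List.range j).map (fun i => σ.getD i 0) = σ.take j := by
  intro j
  induction j with
  | zero => simp
  | succ j ih =>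
    intro hj
    rw [range_map_succ, ih (by omega), List.take_succ]
    congr 1
    have hlt : j < σ.length := hj
    rw [List.getD_eq_getElem σ 0 hlt, List.getElem?_eq_getElem hlt]
    rfl

lemma acc_iff {R : ℕ × List ℕ → Bool} {n : ℕ} {σ : List ℕ} :
    acc R n σ = true ↔ ∀ j, j ≤ σ.length → R (n, σ.take j) = true := by
  have go : ∀ m, m ≤ σ.length + 1 →
      ((Nat.rec true (fun j b => b && R (n, (List.range j).map (fun i => σ.getD i 0))) m : Bool)
        = true ↔ ∀ j, j < m → R (n, σ.take j) = true) := by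
    intro m
    induction m with
    | zero => simp
    | succ m ih =>
      intro hm
      have hm' : m ≤ σ.length := by omega
      simp only [Bool.and_eq_true, ih (by omega), range_map_getD σ m hm']
      constructor
      · rintro ⟨h1, h2⟩ j hj
        rcases Nat.lt_succ_iff_lt_or_eq.mp hj with h | rfl
        · exact h1 j h
        · exact h2
      · intro h
        exact ⟨fun j hj => h j (by omega), h m (by omega)⟩
  rw [acc, go (σ.length + 1) le_rfl]
  constructor
  · intro h j hj; exact h j (by omega)
  · intro h j hj; exact h j (by omega)

lemma acc_self {R n σ} (h : acc R n σ = true) : R (n, σ) = true := by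
  have := acc_iff.mp h σ.length le_rfl
  rwa [List.take_length] at this

lemma path_iff {R : ℕ × List ℕ → Bool} {n : ℕ} {f : ℕ → ℕ} :
    (∀ k, R (n, (List.range k).map f) = true) ↔
    (∀ k, acc R n ((List.range k).map f) = true) := by
  constructor
  · intro h k
    apply acc_iff.mpr
    intro j hj
    rw [List.length_map, List.length_range] at hj
    rw [← List.map_take, List.take_range (i := j) (n := k), min_eq_left hj]
    exact h j
  · intro h k
    exact acc_self (h k)

lemma acc_computable {R : ℕ × List ℕ → Bool} (hR : Computable R) :
    Computable₂ (acc R) := by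
  have htake : Primrec₂ (fun (σ : List ℕ) (j : ℕ) =>
      (List.range j).map (fun i => σ.getD i 0)) := by
    apply Primrec.list_map (Primrec.list_range.comp Primrec.snd)
    exact (Primrec.list_getD 0).comp (Primrec.fst.comp Primrec.fst) Primrec.snd
  have hstep : Computable₂ (fun (p : ℕ × List ℕ) (q : ℕ × Bool) =>
      q.2 && R (p.1, (List.range q.1).map (fun i => p.2.getD i 0))) := by
    apply Computable₂.mk
    have h1 : Computable (fun x : (ℕ × List ℕ) × ℕ × Bool =>
        R (x.1.1, (List.range x.2.1).map (fun i => x.1.2.getD i 0))) := by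
      apply hR.comp
      exact Computable.pair (Computable.fst.comp Computable.fst)
        ((htake.comp (Primrec.snd.comp Primrec.fst) (Primrec.fst.comp Primrec.snd)).to_comp)
    exact (Primrec.and.to_comp).comp (Computable.snd.comp Computable.snd) h1
  have := Computable.nat_rec
    (f := fun p : ℕ × List ℕ => p.2.length + 1)
    (g := fun _ : ℕ × List ℕ => true)
    (h := fun (p : ℕ × List ℕ) (q : ℕ × Bool) =>
      q.2 && R (p.1, (List.range q.1).map (fun i => p.2.getD i 0)))
    ((Primrec.succ.comp (Primrec.list_length.comp Primrec.snd)).to_comp)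
    (Computable.const true) hstep
  exact this

end PT
namespace PT

open Primrec in
lemma compMem_computable (tag : ℕ) (rig : Bool) {R : ℕ × List ℕ → Bool}
    (hR : Computable R) :
    Computable₂ (fun n (t : WangTile) => compMem tag rig (acc R n) t) := by
  have hrr : Primrec (fun t : WangTile => t.2.2.1) :=
    Primrec.fst.comp (Primrec.snd.comp Primrec.snd)
  have hkof : Primrec kof :=
    Primrec.snd.comp (Primrec.unpair.comp
      (Primrec.snd.comp (Primrec.unpair.comp hrr)))
  have hρof : Primrec ρof := (Primrec.ofNat (List ℕ)).comp hkof
  have hvcol : Primrec (vcol tag rig) := by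
    cases rig
    · exact (Primrec.const (Nat.pair tag (Nat.pair 2 0))).of_eq (fun w => rfl)
    · exact Primrec₂.natPair.comp (Primrec.const tag)
        (Primrec₂.natPair.comp (Primrec.const 2) Primrec.id)
  have hhpad : Primrec (hpad tag) :=
    Primrec₂.natPair.comp (Primrec.const tag)
      (Primrec₂.natPair.comp (Primrec.const 0) Primrec.id)
  have hhnode : Primrec (hnode tag) :=
    Primrec₂.natPair.comp (Primrec.const tag)
      (Primrec₂.natPair.comp (Primrec.const 1) Primrec.encode)
  have hpadF : Primrec (fun t : WangTile => padT tag rig (kof t)) := by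
    unfold padT
    exact Primrec.pair (hhpad.comp (Primrec.succ.comp hkof))
      (Primrec.pair (hvcol.comp (Primrec₂.natPair.comp (Primrec.const 0) hkof))
        (Primrec.pair (hhpad.comp hkof)
          (hvcol.comp (Primrec₂.natPair.comp (Primrec.const 0) hkof))))
  have hdropLast : Primrec (fun l : List ℕ => l.dropLast) :=
    (Primrec.list_reverse.comp (Primrec.list_tail.comp Primrec.list_reverse)).of_eq
      (fun l => by simp [List.tail_reverse])
  have hclimbF : Primrec (fun t : WangTile => climbT tag rig (ρof t)) := by
    unfold climbT
    have hv : Primrec (fun t : WangTile =>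
        vcol tag rig (Nat.pair 2 (Encodable.encode (ρof t)))) :=
      hvcol.comp (Primrec₂.natPair.comp (Primrec.const 2) (Primrec.encode.comp hρof))
    exact Primrec.pair (hhnode.comp (hdropLast.comp hρof))
      (Primrec.pair hv (Primrec.pair (hhnode.comp hρof) hv))
  have hp1 : Primrec (fun t : WangTile => decide (t = padT tag rig (kof t))) :=
    (Primrec.eq.comp Primrec.id hpadF).decide
  have hp2 : Primrec (fun t : WangTile => decide (t = bndT tag rig)) :=
    (Primrec.eq.comp Primrec.id (Primrec.const _)).decide
  have hp3 : Primrec (fun t : WangTile => decide (ρof t ≠ [])) :=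
    (Primrec.not.comp (Primrec.eq.comp hρof (Primrec.const [])).decide).of_eq
      (fun t => by by_cases h : ρof t = [] <;> simp [h])
  have hp4 : Primrec (fun t : WangTile => decide (t = climbT tag rig (ρof t))) :=
    (Primrec.eq.comp Primrec.id hclimbF).decide
  have hacc := acc_computable hR
  have ha0 : Computable (fun n : ℕ => acc R n []) :=
    hacc.comp Computable.id (Computable.const [])
  have haρ : Computable (fun p : ℕ × WangTile => acc R p.1 (ρof p.2)) :=
    hacc.comp Computable.fst (hρof.comp Primrec.snd).to_comp
  apply Computable₂.mk
  have hband : Computable₂ (fun a b : Bool => a && b) := Primrec.and.to_comp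
  have hbor : Computable₂ (fun a b : Bool => a || b) := Primrec.or.to_comp
  refine hbor.comp (hbor.comp ?_ ?_) ?_
  · exact (hp1.comp Primrec.snd).to_comp
  · exact hband.comp (ha0.comp Computable.fst) (hp2.comp Primrec.snd).to_comp
  · exact hband.comp (hband.comp (hp3.comp Primrec.snd).to_comp haρ)
      (hp4.comp Primrec.snd).to_comp

lemma chi_computable {RA RB : ℕ × List ℕ → Bool}
    (hRA : Computable RA) (hRB : Computable RB) :
    Computable₂ (fun n m =>
      bif STilesB (acc RA n) (acc RB n) (Denumerable.ofNat (ℕ × ℕ × ℕ × ℕ) m)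
      then (1 : ℕ) else 0) := by
  have h1 := compMem_computable 0 true hRA
  have h2 := compMem_computable 1 false hRB
  have hofNat : Computable (fun m : ℕ => (Denumerable.ofNat (ℕ × ℕ × ℕ × ℕ) m : WangTile)) :=
    (Primrec.ofNat _).to_comp
  apply Computable₂.mk
  have hSTB : Computable (fun p : ℕ × ℕ =>
      STilesB (acc RA p.1) (acc RB p.1) (Denumerable.ofNat (ℕ × ℕ × ℕ × ℕ) p.2)) := by
    unfold STilesB
    exact (Primrec.or.to_comp).comp
      (h1.comp Computable.fst (hofNat.comp Computable.snd))
      (h2.comp Computable.fst (hofNat.comp Computable.snd))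
  exact Computable.cond hSTB (Computable.const 1) (Computable.const 0)

end PT
namespace PT

def chi (RA RB : ℕ × List ℕ → Bool) (n m : ℕ) : ℕ :=
  bif STilesB (acc RA n) (acc RB n) (Denumerable.ofNat (ℕ × ℕ × ℕ × ℕ) m) then 1 else 0

lemma chi_computable' {RA RB : ℕ × List ℕ → Bool}
    (hRA : Computable RA) (hRB : Computable RB) : Computable₂ (chi RA RB) :=
  chi_computable hRA hRB

lemma chi_cases (RA RB : ℕ × List ℕ → Bool) (n m : ℕ) :
    chi RA RB n m = 0 ∨ chi RA RB n m = 1 := by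
  unfold chi
  cases STilesB (acc RA n) (acc RB n) (Denumerable.ofNat (ℕ × ℕ × ℕ × ℕ) m) <;> simp

lemma chi_eq_one_iff (RA RB : ℕ × List ℕ → Bool) (n : ℕ) (t : WangTile) :
    chi RA RB n (Encodable.encode t) = 1 ↔ t ∈ Sset (acc RA n) (acc RB n) := by
  unfold chi
  rw [Denumerable.ofNat_encode]
  have : t ∈ Sset (acc RA n) (acc RB n) ↔ STilesB (acc RA n) (acc RB n) t = true := Iff.rfl
  rw [this]
  cases STilesB (acc RA n) (acc RB n) t <;> simp

end PT

/-- Every intersection of a `Σ¹₁` set with a `Π¹₁` set is many-one reducible to `PTile`. -/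
theorem sigma11_inter_pi11_manyOneReducible_PTile (X A B : Set ℕ)
    (hX : X = A ∩ B) (hA : Sigma11 A) (hB : Pi11 B) :
    (· ∈ X) ≤₀ (· ∈ PTile) := by
  classical
  obtain ⟨RA, hRAc, hAiff⟩ := hA
  obtain ⟨RB, hRBc, hBiff⟩ := hB
  have hRB'c : Computable (fun p : ℕ × List ℕ => !RB p) := Primrec.not.to_comp.comp hRBc
  set RB' : ℕ × List ℕ → Bool := fun p => !RB p with hRB'def
  have hχ : Computable₂ (PT.chi RA RB') := PT.chi_computable' hRAc hRB'c
  have hcomp1 : Computable (fun p : ℕ => PT.chi RA RB' p.unpair.1 p.unpair.2) :=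
    hχ.comp (Computable.fst.comp Primrec.unpair.to_comp)
      (Computable.snd.comp Primrec.unpair.to_comp)
  have hpart : Nat.Partrec (fun p : ℕ =>
      (PT.chi RA RB' p.unpair.1 p.unpair.2 : Part ℕ)) := Partrec.nat_iff.mp hcomp1
  obtain ⟨c, hc⟩ := Nat.Partrec.Code.exists_code.mp hpart
  obtain ⟨sm, hsmc, hsm⟩ := Nat.Partrec.Code.smn
  refine ⟨fun n => Encodable.encode (sm c n),
    Computable.encode.comp (hsmc.comp (Computable.const c) Computable.id), fun n => ?_⟩
  have hPhi : ∀ m, Phi (Encodable.encode (sm c n)) m = Part.some (PT.chi RA RB' n m) := by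
    intro m
    show (Denumerable.ofNat Nat.Partrec.Code (Encodable.encode (sm c n))).eval m = _
    rw [Denumerable.ofNat_encode, hsm, hc]
    simp [Nat.unpair_pair]
  have hTB : PhiTotalBool (Encodable.encode (sm c n)) := by
    intro m
    refine ⟨PT.chi RA RB' n m, ?_, ?_⟩
    · rw [hPhi]; exact Part.mem_some _
    · exact PT.chi_cases RA RB' n m
  have hTS : PhiTileSet (Encodable.encode (sm c n)) =
      PT.Sset (PT.acc RA n) (PT.acc RB' n) := by
    ext t
    show 1 ∈ Phi (Encodable.encode (sm c n)) (Encodable.encode t) ↔ _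
    rw [hPhi, Part.mem_some_iff, eq_comm]
    exact PT.chi_eq_one_iff RA RB' n t
  -- the arithmetical side
  have hAn : n ∈ A ↔ ∃ f : ℕ → ℕ, ∀ k, PT.acc RA n ((List.range k).map f) = true := by
    rw [hAiff n]
    exact ⟨fun ⟨f, hf⟩ => ⟨f, PT.path_iff.mp hf⟩, fun ⟨f, hf⟩ => ⟨f, PT.path_iff.mpr hf⟩⟩
  have hBn : n ∈ B ↔ ¬ ∃ g : ℕ → ℕ, ∀ k, PT.acc RB' n ((List.range k).map g) = true := by
    rw [hBiff n]
    constructor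
    · rintro h ⟨g, hg⟩
      obtain ⟨k, hk⟩ := h g
      have := PT.acc_self (hg k)
      rw [hRB'def] at this
      simp only [hk] at this
      simp at this
    · intro h g
      by_contra hk
      push_neg at hk
      refine h ⟨g, fun k => PT.path_iff.mp (fun k' => ?_) k⟩
      have := hk k'
      rw [hRB'def]
      simp only [Bool.not_eq_true] at this ⊢
      simp [this]
  have hmain := PT.tiling_iff (PT.acc RA n) (PT.acc RB' n)
  show n ∈ X ↔ _ ∈ PTile
  rw [hX, Set.mem_inter_iff, hAn, hBn, hmain]
  constructor
  · rintro ⟨h1, h2⟩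
    exact ⟨hTB, by rw [hTS]; exact h1, by rw [hTS]; exact h2⟩
  · rintro ⟨_, h1, h2⟩
    rw [hTS] at h1 h2
    exact ⟨h1, h2⟩
end

section
/- For every n < 256 there exist a finite set S of Wang prototiles with at most 18 elements, an injection ι : Bool → S, and positive integers p, q such that: (i) for every configuration c : ℤ → Bool there exists an S-tiling f of the lower half-plane H with f(p·i, −q·k) = ι((R_n)^k(c)(i)) for all i ∈ ℤ and k ∈ ℕ; and (ii) for every S-tiling f of H such that f(p·i, 0) lies in the range of ι for all i ∈ ℤ, the configuration c : ℤ → Bool determined by ι(c(i)) = f(p·i, 0) satisfies f(p·i, −q·k) = ι((R_n)^k(c)(i)) for all i ∈ ℤ and k ∈ ℕ. -/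
/-- The local rule of the elementary cellular automaton `R_n`. -/
def ecaLocal (n : ℕ) (a b c : Bool) : Bool :=
  n.testBit (4 * a.toNat + 2 * b.toNat + c.toNat)

/-- The global rule of the elementary cellular automaton `R_n`. -/
def ecaGlobal (n : ℕ) (c : ℤ → Bool) : ℤ → Bool :=
  fun i => ecaLocal n (c (i - 1)) (c i) (c (i + 1))

/-- The lower half-plane `H`. -/
def lowerHalf : Set (ℤ × ℤ) := {p : ℤ × ℤ | p.2 ≤ 0}

/-- value tile -/
def Vt (b : Bool) : WangTile := (8, b.toNat, 8, 2 + b.toNat)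
/-- computation tile -/
def Ct (n : ℕ) (a b c : Bool) : WangTile :=
  (4 + 2 * a.toNat + b.toNat, 2 + b.toNat, 4 + 2 * b.toNat + c.toNat, (ecaLocal n a b c).toNat)

def Sn (n : ℕ) : Finset WangTile :=
  {Vt false, Vt true} ∪ (Finset.univ.image (fun x : Bool × Bool × Bool => Ct n x.1 x.2.1 x.2.2))

lemma Vt_mem (n : ℕ) (b : Bool) : Vt b ∈ Sn n := by
  cases b <;> simp [Sn]

lemma Ct_mem (n : ℕ) (a b c : Bool) : Ct n a b c ∈ Sn n := by
  simp only [Sn, Finset.mem_union, Finset.mem_image]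
  exact Or.inr ⟨(a, b, c), Finset.mem_univ _, rfl⟩

lemma mem_Sn (n : ℕ) (t : WangTile) (ht : t ∈ Sn n) :
    (∃ b, t = Vt b) ∨ ∃ a b c, t = Ct n a b c := by
  simp only [Sn, Finset.mem_union, Finset.mem_insert, Finset.mem_singleton,
    Finset.mem_image] at ht
  rcases ht with (h | h) | ⟨⟨a, b, c⟩, -, h⟩
  · exact Or.inl ⟨false, h⟩
  · exact Or.inl ⟨true, h⟩
  · exact Or.inr ⟨a, b, c, h.symm⟩

lemma toNat_inj {a b : Bool} (h : a.toNat = b.toNat) : a = b := by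
  cases a <;> cases b <;> simp_all

/-- the canonical tiling associated to a configuration -/
noncomputable def tf (n : ℕ) (c : ℤ → Bool) : ℤ × ℤ → WangTile := fun p =>
  let k := (-p.2).toNat / 2
  if p.2 % 2 = 0 then Vt ((ecaGlobal n)^[k] c p.1)
  else Ct n ((ecaGlobal n)^[k] c (p.1 - 1)) ((ecaGlobal n)^[k] c p.1)
    ((ecaGlobal n)^[k] c (p.1 + 1))

lemma cfg_succ (n : ℕ) (c : ℤ → Bool) (k : ℕ) (i : ℤ) :
    (ecaGlobal n)^[k + 1] c i =
      ecaLocal n ((ecaGlobal n)^[k] c (i - 1)) ((ecaGlobal n)^[k] c i)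
        ((ecaGlobal n)^[k] c (i + 1)) := by
  rw [Function.iterate_succ_apply']
  rfl

lemma tf_tiling (n : ℕ) (c : ℤ → Bool) : IsTiling (↑(Sn n)) lowerHalf (tf n c) := by
  refine ⟨?_, ?_, ?_⟩
  · intro p _
    simp only [tf]
    split
    · exact Finset.mem_coe.mpr (Vt_mem _ _)
    · exact Finset.mem_coe.mpr (Ct_mem _ _ _ _)
  · intro x y _ _
    by_cases h : y % 2 = 0
    · simp [tf, h, Vt, tileRight, tileLeft]
    · simp only [tf, h, if_neg, if_false]
      simp [Ct, tileRight, tileLeft, show x + 1 - 1 = x by ring]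
  · intro x y hy hy1
    simp only [lowerHalf, Set.mem_setOf_eq] at hy hy1
    by_cases h : y % 2 = 0
    ·
      have h1 : ¬ (y + 1) % 2 = 0 := by omega
      have hk : (-y).toNat / 2 = (-(y + 1)).toNat / 2 + 1 := by omega
      simp only [tf, h, if_pos, h1, if_neg, if_true, if_false]
      rw [hk, cfg_succ]
      simp [Vt, Ct, tileUp, tileBottom]
    · have h1 : (y + 1) % 2 = 0 := by omega
      have hk : (-y).toNat / 2 = (-(y + 1)).toNat / 2 := by omega
      simp only [tf, h, h1, if_pos, if_neg, if_true, if_false]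
      rw [hk]
      simp [Vt, Ct, tileUp, tileBottom]

lemma tf_spec (n : ℕ) (c : ℤ → Bool) (i : ℤ) (k : ℕ) :
    tf n c (i, -((2 : ℤ) * k)) = Vt ((ecaGlobal n)^[k] c i) := by
  have h : ((2 : ℤ) * k).toNat / 2 = k := by omega
  have h2 : (-((2 : ℤ) * k)) % 2 = 0 := by omega
  simp [tf, h, h2]

/-- uniqueness: even rows are forced -/
lemma forced (n : ℕ) (f : ℤ × ℤ → WangTile) (hf : IsTiling (↑(Sn n)) lowerHalf f)
    (c : ℤ → Bool) (h0 : ∀ i : ℤ, f (i, 0) = Vt (c i)) :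
    ∀ k : ℕ, ∀ i : ℤ, f (i, -((2 : ℤ) * k)) = Vt ((ecaGlobal n)^[k] c i) := by
  obtain ⟨hmem, hhor, hver⟩ := hf
  intro k
  induction k with
  | zero => intro i; simpa using h0 i
  | succ k ih =>
    -- step A: row -(2k)-1 is forced to be computation tiles
    set g : ℤ → Bool := (ecaGlobal n)^[k] c with hg
    have hA : ∀ i : ℤ, ∃ a d : Bool, f (i, -((2 : ℤ) * k) - 1) = Ct n a (g i) d := by
      intro i
      have hm := hmem (i, -((2 : ℤ) * k) - 1) (by simp only [lowerHalf, Set.mem_setOf_eq]; omega)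
      have hv := hver i (-((2 : ℤ) * k) - 1) (by simp only [lowerHalf, Set.mem_setOf_eq]; omega)
        (by simp only [lowerHalf, Set.mem_setOf_eq]; omega)
      rw [show -((2 : ℤ) * k) - 1 + 1 = -((2 : ℤ) * k) by ring, ih i] at hv
      rcases mem_Sn n _ hm with ⟨b, hb⟩ | ⟨a, b, d, habd⟩
      · exfalso
        rw [hb] at hv
        simp only [Vt, tileUp, tileBottom] at hv
        have := Bool.toNat_le b
        omega
      · rw [habd] at hv ⊢
        simp only [Ct, Vt, tileUp, tileBottom] at hv
        have hbi : b.toNat = (g i).toNat := by omega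
        have : b = g i := toNat_inj hbi
        exact ⟨a, d, by rw [this]⟩
    have hB : ∀ i : ℤ, f (i, -((2 : ℤ) * k) - 1) = Ct n (g (i - 1)) (g i) (g (i + 1)) := by
      intro i
      obtain ⟨a, d, had⟩ := hA i
      obtain ⟨a', d', had'⟩ := hA (i + 1)
      obtain ⟨a'', d'', had''⟩ := hA (i - 1)
      -- horizontal match between i and i+1 gives d = g (i+1)
      have h1 := hhor i (-((2 : ℤ) * k) - 1) (by simp only [lowerHalf, Set.mem_setOf_eq]; omega)
        (by simp only [lowerHalf, Set.mem_setOf_eq]; omega)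
      rw [had, had'] at h1
      simp only [Ct, tileRight, tileLeft] at h1
      have hd : d = g (i + 1) := toNat_inj (by
        have := Bool.toNat_le (g i); have := Bool.toNat_le a'
        have := Bool.toNat_le d; have := Bool.toNat_le (g (i + 1)); omega)
      -- horizontal match between i-1 and i gives a = g (i-1)
      have h2 := hhor (i - 1) (-((2 : ℤ) * k) - 1) (by simp only [lowerHalf, Set.mem_setOf_eq]; omega)
        (by simp only [lowerHalf, Set.mem_setOf_eq]; omega)
      rw [had'', show i - 1 + 1 = i by ring, had] at h2
      simp only [Ct, tileRight, tileLeft] at h2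
      have ha : a = g (i - 1) := toNat_inj (by
        have := Bool.toNat_le (g (i - 1)); have := Bool.toNat_le a
        have := Bool.toNat_le d''; have := Bool.toNat_le (g i); omega)
      rw [had, ha, hd]
    -- step B: row -(2(k+1)) is forced to be value tiles
    intro i
    have hm := hmem (i, -((2 : ℤ) * (k + 1 : ℕ))) (by simp only [lowerHalf, Set.mem_setOf_eq]; omega)
    have hv := hver i (-((2 : ℤ) * (k + 1 : ℕ)))
      (by simp only [lowerHalf, Set.mem_setOf_eq]; omega) (by simp only [lowerHalf, Set.mem_setOf_eq]; omega)
    rw [show -((2 : ℤ) * (k + 1 : ℕ)) + 1 = -((2 : ℤ) * k) - 1 by push_cast; ring,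
      hB i] at hv
    rcases mem_Sn n _ hm with ⟨b, hb⟩ | ⟨a, b, d, habd⟩
    · rw [hb] at hv ⊢
      simp only [Vt, Ct, tileUp, tileBottom] at hv
      have : b = ecaLocal n (g (i - 1)) (g i) (g (i + 1)) := toNat_inj hv
      rw [this, ← cfg_succ]
    · exfalso
      rw [habd] at hv
      simp only [Ct, tileUp, tileBottom] at hv
      have := Bool.toNat_le (ecaLocal n (g (i - 1)) (g i) (g (i + 1)))
      omega

/-- Every elementary cellular automaton is encoded by a set of at most 18 Wang
prototiles tiling the lower half-plane. -/
theorem eca_encoded_by_18_wang_tiles :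
    ∀ n : ℕ, n < 256 →
      ∃ S : Finset WangTile, S.card ≤ 18 ∧
        ∃ ι : Bool → WangTile, Function.Injective ι ∧ (∀ b : Bool, ι b ∈ S) ∧
          ∃ p q : ℕ, 0 < p ∧ 0 < q ∧
            (∀ c : ℤ → Bool, ∃ f : ℤ × ℤ → WangTile,
              IsTiling (↑S) lowerHalf f ∧
              ∀ i : ℤ, ∀ k : ℕ,
                f ((p : ℤ) * i, -((q : ℤ) * (k : ℤ))) = ι ((ecaGlobal n)^[k] c i)) ∧
            (∀ f : ℤ × ℤ → WangTile, IsTiling (↑S) lowerHalf f →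
              (∀ i : ℤ, ∃ b : Bool, f ((p : ℤ) * i, 0) = ι b) →
              ∀ c : ℤ → Bool, (∀ i : ℤ, f ((p : ℤ) * i, 0) = ι (c i)) →
                ∀ i : ℤ, ∀ k : ℕ,
                  f ((p : ℤ) * i, -((q : ℤ) * (k : ℤ))) = ι ((ecaGlobal n)^[k] c i)) := by
  intro n _
  refine ⟨Sn n, ?_, Vt, ?_, Vt_mem n, 1, 2, one_pos, two_pos, ?_, ?_⟩
  · calc (Sn n).card ≤ ({Vt false, Vt true} : Finset WangTile).card +
        (Finset.univ.image (fun x : Bool × Bool × Bool => Ct n x.1 x.2.1 x.2.2)).card :=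
          Finset.card_union_le _ _
      _ ≤ 2 + 8 := by
          gcongr
          · exact (Finset.card_insert_le _ _).trans (by simp)
          · exact (Finset.card_image_le).trans (by simp)
      _ ≤ 18 := by norm_num
  · intro a b h
    cases a <;> cases b <;> simp_all [Vt]
  · intro c
    refine ⟨tf n c, tf_tiling n c, fun i k => ?_⟩
    simpa using tf_spec n c i k
  · intro f hf _ c hc i k
    have h0 : ∀ i : ℤ, f (i, 0) = Vt (c i) := fun i => by simpa using hc i
    simpa using forced n f hf c h0 k i
end
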